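/- arXiv:2208.11966 — 7 statements merged into one kernel-verified Lean document; each statement's English description precedes it below -/
import Mathlib

section
/- Let Q be a finite quiver. The invariant ring ℛ^G is generated as a ℂ-algebra by the cycle monomials, i.e. ℛ^G equals the ℂ-subalgebra of ℛ generated by the elements x_p := ∏ (variables of the arrows of p), where p ranges over all paths of positive length in Q whose start vertex equals its end vertex. -/
/-!
Let `Q` be a finite quiver with vertices `V`, arrows `E`, tail map `t` and head map `h`.
`ℛ := ℂ[x_q : q ∈ E]`, with the torus `G = (ℂ*)^V` acting by `μ · x_q = μ_{t q}⁻¹ μ_{h q} x_q`.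

STATEMENT 1: the invariant ring `ℛ^G` is generated as a `ℂ`-algebra by the cycle monomials
`x_p` for `p` a path of positive length with equal start and end vertex.
-/

/-- The action of a torus element `μ` on the coordinate ring of the representation variety. -/
noncomputable def torusAct {V E : Type} (t h : E → V) (μ : V → ℂˣ) :
    MvPolynomial E ℂ →ₐ[ℂ] MvPolynomial E ℂ :=
  MvPolynomial.aeval fun q =>
    MvPolynomial.C ((μ (t q) : ℂ)⁻¹ * (μ (h q) : ℂ)) * MvPolynomial.X q

/-- The invariant subalgebra `ℛ^G`. -/
noncomputable def invAlg {V E : Type} (t h : E → V) :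
    Subalgebra ℂ (MvPolynomial E ℂ) where
  carrier := {f | ∀ μ : V → ℂˣ, torusAct t h μ f = f}
  mul_mem' := fun ha hb μ => by rw [map_mul, ha μ, hb μ]
  add_mem' := fun ha hb μ => by rw [map_add, ha μ, hb μ]
  algebraMap_mem' := fun c μ => (torusAct t h μ).commutes c

/-- The set of cycle monomials `x_p`, where `p` runs over all paths of positive length in `Q`
whose start vertex equals its end vertex: a path is a nonempty composable list of arrows
(head of each arrow = tail of the next), and being a cycle means the tail of the first arrow
equals the head of the last one. -/
def cycleMonomials {V E : Type} (t h : E → V) : Set (MvPolynomial E ℂ) :=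
  {f | ∃ qs : List E, qs ≠ [] ∧
    List.Chain' (fun p q => h p = t q) qs ∧
    (∃ q0 qn, qs.head? = some q0 ∧ qs.getLast? = some qn ∧ t q0 = h qn) ∧
    f = (qs.map MvPolynomial.X).prod}

open MvPolynomial

namespace InvariantsCycles

variable {V E : Type}

/-- Shift lemma: the heads of a chain are its tails shifted by one, plus the last head. -/
lemma chainShift (t h : E → V) : ∀ (qs : List E) (qn : E),
    List.Chain' (fun p q => h p = t q) qs →
    qs.getLast? = some qn → qs.map h = (qs.map t).tail ++ [h qn]
  | [], _ => by simp
  | [q], qn => by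
      intro _ hl
      simp only [List.getLast?_singleton, Option.some.injEq] at hl
      subst hl; simp
  | q :: r :: l, qn => by
      intro hch hl
      have h1 : h q = t r := (List.isChain_cons_cons.mp hch).1
      have ih := chainShift t h (r :: l) qn (List.isChain_cons_cons.mp hch).2
        (by rwa [List.getLast?_cons_cons] at hl)
      simp only [List.map_cons, List.tail_cons] at ih ⊢
      rw [ih, h1]
      simp

/-- For a cycle, the list of heads is a permutation of the list of tails. -/
lemma cyclePerm (t h : E → V) (qs : List E) (q0 qn : E)
    (hch : List.Chain' (fun p q => h p = t q) qs)
    (h0 : qs.head? = some q0) (hn : qs.getLast? = some qn) (hc : t q0 = h qn) :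
    (qs.map h).Perm (qs.map t) := by
  have h1 := chainShift t h qs qn hch hn
  have h2 : qs.map t = t q0 :: (qs.map t).tail := by
    cases qs with
    | nil => simp at h0
    | cons a l => simp only [List.head?_cons, Option.some.injEq] at h0; subst h0; simp
  rw [h1, ← hc]
  conv_rhs => rw [h2]
  exact List.perm_append_singleton _ _

lemma inv_prod_list (l : List E) (f : E → ℂˣ) :
    (l.map fun q => (f q)⁻¹).prod = ((l.map f).prod)⁻¹ := by
  induction l with
  | nil => simp
  | cons a l ih => simp [ih, mul_inv, mul_comm]

lemma prod_weight_eq_one (t h : E → V) (μ : V → ℂˣ) (qs : List E)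
    (hperm : (qs.map h).Perm (qs.map t)) :
    (qs.map fun q => (μ (t q) : ℂ)⁻¹ * (μ (h q) : ℂ)).prod = 1 := by
  have hmap : (qs.map fun q => μ (h q)).prod = (qs.map fun q => μ (t q)).prod := by
    have := (hperm.map μ).prod_eq
    simpa [List.map_map, Function.comp_def] using this
  have key : ((qs.map fun q => (μ (t q))⁻¹ * (μ (h q)) : List ℂˣ)).prod = 1 := by
    rw [List.prod_map_mul, inv_prod_list, hmap, inv_mul_cancel]
  have := congrArg (Units.coeHom ℂ) key
  rw [map_list_prod] at this
  simp only [List.map_map, Function.comp_def, Units.coeHom_apply, Units.val_mul,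
    Units.val_inv_eq_inv_val] at this
  exact this

/-- The weight by which a torus element scales a monomial with exponent vector `d`. -/
noncomputable def wt (t h : E → V) (μ : V → ℂˣ) (d : E →₀ ℕ) : ℂ :=
  ∏ q ∈ d.support, ((μ (t q) : ℂ)⁻¹ * (μ (h q) : ℂ)) ^ d q

lemma torusAct_monomial (t h : E → V) (μ : V → ℂˣ) (d : E →₀ ℕ) (c : ℂ) :
    torusAct t h μ (monomial d c) = wt t h μ d • monomial d c := by
  rw [smul_eq_C_mul, torusAct, aeval_monomial, monomial_eq, wt]
  simp only [Finsupp.prod]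
  simp only [mul_pow, ← C_pow, Finset.prod_mul_distrib, ← map_prod]
  rw [algebraMap_eq]
  ring

lemma coeff_torusAct (t h : E → V) (μ : V → ℂˣ) (f : MvPolynomial E ℂ) (d : E →₀ ℕ) :
    coeff d (torusAct t h μ f) = wt t h μ d * coeff d f := by
  classical
  conv_lhs => rw [f.as_sum, map_sum]
  rw [coeff_sum]
  simp only [torusAct_monomial, coeff_smul, coeff_monomial, smul_eq_mul, mul_ite, mul_zero]
  rw [Finset.sum_ite_eq' f.support d fun d' => wt t h μ d' * coeff d' f]
  split_ifs with hd
  · rfl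
  · rw [notMem_support_iff.mp hd, mul_zero]

lemma sum_filter_eq [DecidableEq V] (t h : E → V) (d : E →₀ ℕ)
    (hw : ∀ μ : V → ℂˣ, (∏ q ∈ d.support, ((μ (t q) : ℂ)⁻¹ * (μ (h q) : ℂ)) ^ d q) = 1)
    (v : V) :
    ∑ q ∈ d.support.filter (fun q => h q = v), d q
      = ∑ q ∈ d.support.filter (fun q => t q = v), d q := by
  classical
  set u : ℂˣ := Units.mk0 2 two_ne_zero with hu
  have hμ := hw (fun w => if w = v then u else 1)
  have hterm : ∀ q ∈ d.support,
      ((((fun w => if w = v then u else 1) (t q) : ℂˣ) : ℂ)⁻¹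
        * (((fun w => if w = v then u else 1) (h q) : ℂˣ) : ℂ)) ^ d q
      = (if t q = v then ((2:ℂ)⁻¹) ^ d q else 1) * (if h q = v then (2:ℂ) ^ d q else 1) := by
    intro q _
    simp only []
    split_ifs <;> simp [hu, mul_pow]
  rw [Finset.prod_congr rfl hterm, Finset.prod_mul_distrib,
    ← Finset.prod_filter, ← Finset.prod_filter,
    Finset.prod_pow_eq_pow_sum, Finset.prod_pow_eq_pow_sum, inv_pow] at hμ
  set A := ∑ q ∈ d.support.filter (fun q => h q = v), d q
  set B := ∑ q ∈ d.support.filter (fun q => t q = v), d q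
  have hBne : (2:ℂ) ^ B ≠ 0 := pow_ne_zero _ two_ne_zero
  have h2 : (2:ℂ) ^ A = 2 ^ B := by
    field_simp at hμ
    try linear_combination hμ
    try exact hμ
    try exact hμ.symm
  have hc : ((2:ℕ):ℂ) ^ A = ((2:ℕ):ℂ) ^ B := by exact_mod_cast h2
  rw [← Nat.cast_pow, ← Nat.cast_pow] at hc
  exact Nat.pow_right_injective le_rfl (Nat.cast_injective hc)

lemma count_map_toMultiset [DecidableEq V] (g : E → V) (d : E →₀ ℕ) (v : V) :
    Multiset.count v (d.toMultiset.map g)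
      = ∑ q ∈ d.support.filter (fun q => g q = v), d q := by
  classical
  rw [Finsupp.toMultiset_apply, Finsupp.sum, ← Multiset.coe_mapAddMonoidHom,
    map_sum (Multiset.mapAddMonoidHom g), Multiset.count_sum']
  simp only [Multiset.coe_mapAddMonoidHom, Multiset.map_nsmul, Multiset.map_singleton,
    Multiset.count_nsmul, Multiset.count_singleton]
  rw [Finset.sum_filter]
  refine Finset.sum_congr rfl fun q _ => ?_
  by_cases hq : g q = v
  · simp [hq]
  · rw [if_neg hq, if_neg fun e => hq e.symm, mul_zero]

lemma monomial_eq_prod (d : E →₀ ℕ) :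
    (monomial d (1:ℂ) : MvPolynomial E ℂ) = (d.toMultiset.map X).prod := by
  rw [Finsupp.toMultiset_map, Finsupp.prod_toMultiset, monomial_eq, C_1, one_mul]
  exact (Finsupp.prod_mapDomain_index (f := X) (s := d) (h := fun p n => p ^ n)
    (fun _ => pow_zero _) (fun _ _ _ => pow_add _ _ _)).symm

/-- Cycle extraction: a nonempty balanced multiset of arrows contains a cycle. -/
lemma exists_cycle [Fintype V] (t h : E → V) (m : Multiset E) (hm : m ≠ 0)
    (hb : m.map h = m.map t) :
    ∃ cs : List E, cs ≠ [] ∧ List.Chain' (fun p q => h p = t q) cs ∧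
      (∃ q0 qn, cs.head? = some q0 ∧ cs.getLast? = some qn ∧ t q0 = h qn) ∧
      (cs : Multiset E) ≤ m := by
  classical
  obtain ⟨q, hq⟩ := Multiset.exists_mem_of_ne_zero hm
  haveI : Nonempty V := ⟨t q⟩
  set N := Fintype.card V with hN
  set P : ℕ → Prop := fun n => ∃ p : List E, p.length = n ∧ p ≠ [] ∧
      List.Chain' (fun a b => h a = t b) p ∧ (p : Multiset E) ≤ m ∧ (p.map t).Nodup with hP
  have hbound : ∀ n, P n → n ≤ N := by
    rintro n ⟨p, hlen, -, -, -, hnd⟩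
    have := hnd.length_le_card
    simpa [hlen] using this
  have hP1 : P 1 := ⟨[q], rfl, by simp, List.isChain_singleton _, by simpa using hq, by simp⟩
  set n := Nat.findGreatest P N with hn
  have hPn : P n := Nat.findGreatest_spec (hbound 1 hP1) hP1
  obtain ⟨p, hlen, hne, hch, hle, hnd⟩ := hPn
  set qn := p.getLast hne with hqn
  set v := h qn with hv
  by_cases hvin : v ∈ p.map t
  · obtain ⟨q', hq'mem, hq't⟩ := List.mem_map.mp hvin
    obtain ⟨l₁, l₂, rfl⟩ := List.append_of_mem hq'mem
    have hlast : (q' :: l₂).getLast? = some qn := by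
      rw [← List.getLast?_append_cons l₁ q' l₂, hqn,
        List.getLast?_eq_getLast_of_ne_nil hne]
    refine ⟨q' :: l₂, by simp, (List.isChain_append.mp hch).2.1,
      ⟨q', qn, rfl, hlast, ?_⟩, ?_⟩
    · rw [hq't, hv]
    · exact le_trans (Multiset.coe_le.mpr
        (List.sublist_append_right l₁ (q' :: l₂)).subperm) hle
  · exfalso
    have hvh : v ∈ p.map h := List.mem_map.mpr ⟨qn, List.getLast_mem hne, rfl⟩
    have h1 : 0 < Multiset.count v (m.map t) := by
      rw [← hb]
      calc 0 < Multiset.count v ((p : Multiset E).map h) := by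
            rw [Multiset.count_pos]; simpa using hvh
        _ ≤ Multiset.count v (m.map h) :=
            Multiset.count_le_of_le _ (Multiset.map_le_map hle)
    obtain ⟨r, hr⟩ := Multiset.le_iff_exists_add.mp hle
    have hcnt0 : Multiset.count v ((p : Multiset E).map t) = 0 := by
      rw [Multiset.count_eq_zero]
      simpa using hvin
    have h2 : 0 < Multiset.count v (r.map t) := by
      rw [hr, Multiset.map_add, Multiset.count_add, hcnt0, zero_add] at h1
      exact h1
    obtain ⟨q2, hq2r, hq2t⟩ := Multiset.mem_map.mp (Multiset.count_pos.mp h2)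
    have hPn1 : P (n + 1) := by
      refine ⟨p ++ [q2], by simp [hlen], by simp, ?_, ?_, ?_⟩
      · refine List.isChain_append.mpr ?_
        refine ⟨hch, List.isChain_singleton _, ?_⟩
        intro x hx y hy
        rw [List.getLast?_eq_getLast_of_ne_nil hne, Option.mem_some_iff] at hx
        simp only [List.head?_cons, Option.mem_some_iff] at hy
        subst hx; subst hy
        rw [← hqn, ← hv, hq2t]
      · rw [hr]
        have : ((p ++ [q2] : List E) : Multiset E) = (p : Multiset E) + {q2} := rfl
        rw [this]
        exact add_le_add_right (Multiset.singleton_le.mpr hq2r) _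
      · rw [List.map_append]
        simp only [List.map_cons, List.map_nil]
        rw [List.nodup_append]
        refine ⟨hnd, List.nodup_singleton _, ?_⟩
        intro x hx y hx2 hxy
        subst hxy
        simp only [List.mem_singleton] at hx2
        subst hx2
        rw [hq2t] at hx
        exact hvin hx
    exact Nat.findGreatest_is_greatest (lt_add_one n) (hbound _ hPn1) hPn1

/-- The product of the variables of a balanced multiset of arrows lies in the algebra
generated by the cycle monomials. -/
lemma balanced_prod_mem [Fintype V] (t h : E → V) :
    ∀ (n : ℕ) (m : Multiset E), Multiset.card m = n → m.map h = m.map t →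
      (m.map X).prod ∈ Algebra.adjoin ℂ (cycleMonomials t h) := by
  intro n
  induction n using Nat.strong_induction_on with
  | _ n ih =>
    intro m hcard hb
    rcases eq_or_ne m 0 with rfl | hm
    · simp only [Multiset.map_zero, Multiset.prod_zero]
      exact one_mem _
    · obtain ⟨cs, hne, hch, hcyc, hle⟩ := exists_cycle t h m hm hb
      obtain ⟨r, hr⟩ := Multiset.le_iff_exists_add.mp hle
      have hcb : (cs : Multiset E).map h = (cs : Multiset E).map t := by
        obtain ⟨q0, qn, h0, hn', hc⟩ := hcyc
        rw [Multiset.map_coe, Multiset.map_coe]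
        exact Multiset.coe_eq_coe.mpr (cyclePerm t h cs q0 qn hch h0 hn' hc)
      have hrb : r.map h = r.map t := by
        rw [hr, Multiset.map_add, Multiset.map_add, hcb] at hb
        exact add_left_cancel hb
      have hcpos : 0 < Multiset.card (cs : Multiset E) := by
        rw [Multiset.coe_card]
        exact List.length_pos_iff.mpr hne
      have hlt : Multiset.card r < n := by
        subst hcard
        rw [hr, Multiset.card_add]
        omega
      have h1 := ih _ hlt r rfl hrb
      have h2 : ((cs : Multiset E).map X).prod ∈ Algebra.adjoin ℂ (cycleMonomials t h) :=
        Algebra.subset_adjoin ⟨cs, hne, hch, hcyc, by rw [Multiset.map_coe, Multiset.prod_coe]⟩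
      rw [hr, Multiset.map_add, Multiset.prod_add]
      exact mul_mem h2 h1

end InvariantsCycles

open InvariantsCycles in
theorem invariants_generated_by_cycles
    {V E : Type} [Fintype V] [Fintype E] (t h : E → V) :
    Algebra.adjoin ℂ (cycleMonomials t h) = invAlg t h := by
  apply le_antisymm
  · rw [Algebra.adjoin_le_iff]
    rintro f ⟨qs, hne, hch, ⟨q0, qn, h0, hn, hc⟩, rfl⟩
    intro μ
    rw [map_list_prod]
    have hmapeq : (qs.map MvPolynomial.X).map (torusAct t h μ)
        = qs.map fun q => MvPolynomial.C ((μ (t q) : ℂ)⁻¹ * (μ (h q) : ℂ))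
            * MvPolynomial.X q := by
      rw [List.map_map]
      refine List.map_congr_left fun q _ => ?_
      simp [torusAct, Function.comp_def]
    rw [hmapeq, List.prod_map_mul]
    have hC : (qs.map fun q =>
        (MvPolynomial.C ((μ (t q) : ℂ)⁻¹ * (μ (h q) : ℂ)) : MvPolynomial E ℂ)).prod = 1 := by
      have hwc : (qs.map fun q =>
          (MvPolynomial.C ((μ (t q) : ℂ)⁻¹ * (μ (h q) : ℂ)) : MvPolynomial E ℂ))
          = (qs.map fun q => ((μ (t q) : ℂ)⁻¹ * (μ (h q) : ℂ))).map MvPolynomial.C := by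
        rw [List.map_map]
        rfl
      rw [hwc, ← map_list_prod (MvPolynomial.C : ℂ →+* MvPolynomial E ℂ),
        prod_weight_eq_one t h μ qs (cyclePerm t h qs q0 qn hch h0 hn hc), map_one]
    rw [hC, one_mul]
  · intro f hf
    classical
    have hmono : ∀ d ∈ f.support,
        (MvPolynomial.monomial d (1:ℂ)) ∈ Algebra.adjoin ℂ (cycleMonomials t h) := by
      intro d hd
      have hw : ∀ μ : V → ℂˣ, wt t h μ d = 1 := by
        intro μ
        have hcoeff := congrArg (MvPolynomial.coeff d) (hf μ)
        rw [coeff_torusAct] at hcoeff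
        exact mul_right_cancel₀ (MvPolynomial.mem_support_iff.mp hd)
          (by rw [hcoeff, one_mul])
      have hbal : ∀ v : V, ∑ q ∈ d.support.filter (fun q => h q = v), d q
          = ∑ q ∈ d.support.filter (fun q => t q = v), d q :=
        fun v => sum_filter_eq t h d (fun μ => hw μ) v
      have hmul : d.toMultiset.map h = d.toMultiset.map t := by
        refine Multiset.ext.mpr fun v => ?_
        rw [count_map_toMultiset, count_map_toMultiset]
        exact hbal v
      rw [monomial_eq_prod]
      exact balanced_prod_mem t h (Multiset.card d.toMultiset) d.toMultiset rfl hmul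
    have hfeq : f = ∑ d ∈ f.support, (MvPolynomial.coeff d f)
        • (MvPolynomial.monomial d (1:ℂ)) := by
      conv_lhs => rw [f.as_sum]
      refine Finset.sum_congr rfl fun d _ => ?_
      rw [MvPolynomial.smul_monomial, smul_eq_mul, mul_one]
    rw [hfeq]
    exact Subalgebra.sum_mem _ fun d hd => Subalgebra.smul_mem _ (hmono d hd) _
end

section
/- Set E := 𝗓_{0,0}·𝗓_{2,s_2}·𝗓_{3,s_3}⋯𝗓_{m+1,s_{m+1}} ∈ ℂ[𝗓]. Then for every variable 𝗓_{i,j} of ℂ[𝗓], the image of 𝗓_{i,j} in the localization of the quotient ring ℂ[𝗓]/QDet(𝗓) away from the class of E (i.e. in (ℂ[𝗓]/QDet(𝗓))[Ē^{−1}]) is a unit. -/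
open MvPolynomial

/-- Number of `j`-indices of the variables `𝗓_{i,j}` in row `i`: one variable `𝗓_{0,0}`
for `i = 0`, one variable `𝗓_{m+1,0}` for `i = m+1`, and `s_i + 1` variables
`𝗓_{i,0},…,𝗓_{i,s_i}` for `1 ≤ i ≤ m`. -/
def nj (m : ℕ) (s : ℕ → ℕ) (i : ℕ) : ℕ := if i = 0 ∨ i = m + 1 then 1 else s i + 1

/-- The index type of the variables of the polynomial ring `ℂ[𝗓]`. -/
abbrev ZIdx (m : ℕ) (s : ℕ → ℕ) : Type := Σ i : Fin (m + 2), Fin (nj m s i.val)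

/-- The variable index `(i,j)` (with a junk value for out-of-range indices). -/
def zidx (m : ℕ) (s : ℕ → ℕ) (i j : ℕ) : ZIdx m s :=
  if h : i < m + 2 ∧ j < nj m s i then ⟨⟨i, h.1⟩, ⟨j, h.2⟩⟩
  else ⟨⟨0, by omega⟩, ⟨0, by simp [nj]⟩⟩

/-- The polynomial ring `ℂ[𝗓]`. -/
abbrev CZ (m : ℕ) (s : ℕ → ℕ) : Type := MvPolynomial (ZIdx m s) ℂ

/-- The variable `𝗓_{i,j}`. -/
noncomputable def Zv (m : ℕ) (s : ℕ → ℕ) (i j : ℕ) : CZ m s := X (zidx m s i j)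

/-- `W_t = 𝗓_{t,1}·𝗓_{t,2}⋯𝗓_{t,s_t−1}`. -/
noncomputable def Wq (m : ℕ) (s : ℕ → ℕ) (t : ℕ) : CZ m s :=
  ∏ u ∈ Finset.Icc 1 (s t - 1), Zv m s t u

/-- The quasiminor `q_{i,j} = 𝗓_{i−1,0}·𝗓_{j,s_j} − 𝗓_{i,s_i}·(∏_{t=i}^{j−1} W_t)·𝗓_{j−1,0}`. -/
noncomputable def qm (m : ℕ) (s : ℕ → ℕ) (i j : ℕ) : CZ m s :=
  Zv m s (i - 1) 0 * Zv m s j (s j)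
    - Zv m s i (s i) * (∏ t ∈ Finset.Icc i (j - 1), Wq m s t) * Zv m s (j - 1) 0

/-- The quasideterminantal ideal `QDet(𝗓)`, generated by the quasiminors `q_{i,j}`
for `1 ≤ i < j ≤ m+1`. -/
noncomputable def QDet (m : ℕ) (s : ℕ → ℕ) : Ideal (CZ m s) :=
  Ideal.span {q | ∃ i j : ℕ, 1 ≤ i ∧ i < j ∧ j ≤ m + 1 ∧ q = qm m s i j}

/-- `s_t = β_t − 1` for `1 ≤ t ≤ m` and `s_{m+1} = 0`. -/
def sfun (m : ℕ) (β : ℕ → ℕ) (t : ℕ) : ℕ := if t ≤ m then β t - 1 else 0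

/-- `E = 𝗓_{0,0}·𝗓_{2,s_2}·𝗓_{3,s_3}⋯𝗓_{m+1,s_{m+1}}`. -/
noncomputable def Emon (m : ℕ) (s : ℕ → ℕ) : CZ m s :=
  Zv m s 0 0 * ∏ t ∈ Finset.Icc 2 (m + 1), Zv m s t (s t)

lemma prod_unit {L : Type*} [CommMonoid L] (S : Finset ℕ) (f : ℕ → L)
    (h : IsUnit (∏ t ∈ S, f t)) : ∀ t ∈ S, IsUnit (f t) := by
  intro t ht
  rw [← Finset.mul_prod_erase S f ht] at h
  exact isUnit_of_mul_isUnit_left h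

lemma aux_units (m : ℕ) (hm : 1 ≤ m) (s : ℕ → ℕ)
    (hs1 : ∀ t, 1 ≤ t → t ≤ m → 1 ≤ s t) (hs2 : s (m + 1) = 0)
    {L : Type*} [CommRing L] (F : CZ m s →+* L)
    (hq : ∀ i j : ℕ, 1 ≤ i → i < j → j ≤ m + 1 → F (qm m s i j) = 0)
    (hE : IsUnit (F (Emon m s))) :
    ∀ p : ZIdx m s, IsUnit (F (X p)) := by
  -- basic unit facts from E
  have hEmul : IsUnit (F (Zv m s 0 0) * ∏ t ∈ Finset.Icc 2 (m + 1), F (Zv m s t (s t))) := by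
    simpa [Emon, map_mul, map_prod] using hE
  have hu00 : IsUnit (F (Zv m s 0 0)) := isUnit_of_mul_isUnit_left hEmul
  have huE : ∀ t, 2 ≤ t → t ≤ m + 1 → IsUnit (F (Zv m s t (s t))) := by
    intro t h2 hle
    exact prod_unit _ _ (isUnit_of_mul_isUnit_right hEmul) t (Finset.mem_Icc.mpr ⟨h2, hle⟩)
  -- the relations
  have hrel : ∀ j : ℕ, 2 ≤ j → j ≤ m + 1 →
      IsUnit (F (Zv m s 1 (s 1)) * (∏ t ∈ Finset.Icc 1 (j - 1), F (Wq m s t))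
        * F (Zv m s (j - 1) 0)) := by
    intro j h2 hle
    have h0 := hq 1 j le_rfl (by omega) hle
    rw [qm, map_sub, sub_eq_zero, map_mul, map_mul, map_mul, map_prod] at h0
    rw [← h0]
    exact hu00.mul (huE j h2 hle)
  have hz0 : ∀ i, 1 ≤ i → i ≤ m → IsUnit (F (Zv m s i 0)) := by
    intro i h1 hle
    have := hrel (i + 1) (by omega) (by omega)
    simpa using isUnit_of_mul_isUnit_right this
  have htop := hrel (m + 1) (by omega) le_rfl
  have hu1s : IsUnit (F (Zv m s 1 (s 1))) :=
    isUnit_of_mul_isUnit_left (isUnit_of_mul_isUnit_left htop)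
  have hW : ∀ t u, 1 ≤ t → t ≤ m → 1 ≤ u → u ≤ s t - 1 → IsUnit (F (Zv m s t u)) := by
    intro t u ht1 htm hu1 hus
    have hprodW : IsUnit (∏ t ∈ Finset.Icc 1 (m + 1 - 1), F (Wq m s t)) :=
      isUnit_of_mul_isUnit_right (isUnit_of_mul_isUnit_left htop)
    have hWt : IsUnit (F (Wq m s t)) :=
      prod_unit _ _ hprodW t (Finset.mem_Icc.mpr ⟨ht1, by omega⟩)
    rw [Wq, map_prod] at hWt
    exact prod_unit _ _ hWt u (Finset.mem_Icc.mpr ⟨hu1, hus⟩)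
  -- now the case analysis
  rintro ⟨⟨i, hi⟩, ⟨j, hj⟩⟩
  have hx : (⟨⟨i, hi⟩, ⟨j, hj⟩⟩ : ZIdx m s) = zidx m s i j := by
    rw [zidx, dif_pos ⟨hi, hj⟩]
  rw [hx]
  show IsUnit (F (Zv m s i j))
  by_cases hi0 : i = 0
  · subst hi0
    have : j = 0 := by simp [nj] at hj; omega
    subst this; exact hu00
  · by_cases him : i = m + 1
    · subst him
      have : j = 0 := by simp [nj] at hj; omega
      subst this
      have := huE (m + 1) (by omega) le_rfl
      rwa [hs2] at this
    · have h1i : 1 ≤ i := by omega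
      have him' : i ≤ m := by omega
      have hjs : j ≤ s i := by simp [nj, hi0, him] at hj; omega
      rcases Nat.eq_zero_or_pos j with hj0 | hj1
      · subst hj0; exact hz0 i h1i him'
      · rcases eq_or_lt_of_le hjs with hje | hjlt
        · subst hje
          rcases eq_or_lt_of_le h1i with h1 | h2
          · rw [← h1]; exact hu1s
          · exact huE i h2 (by omega)
        · exact hW i j h1i him' hj1 (by omega)

/-- every variable `𝗓_{i,j}` becomes a unit in the localization
`(ℂ[𝗓]/QDet(𝗓))[Ē⁻¹]` of the quotient ring away from the class `Ē` of `E`. -/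
theorem variables_unit_in_localization_away_E
    (m : ℕ) (hm : 1 ≤ m) (β : ℕ → ℕ) (hβ : ∀ t, 1 ≤ t → t ≤ m → 2 ≤ β t) :
    ∀ p : ZIdx m (sfun m β),
      IsUnit (algebraMap (CZ m (sfun m β) ⧸ QDet m (sfun m β))
        (Localization.Away
          ((Ideal.Quotient.mk (QDet m (sfun m β))) (Emon m (sfun m β))))
        ((Ideal.Quotient.mk (QDet m (sfun m β))) (X p))) := by
  intro p
  have key := aux_units m hm (sfun m β)
    (fun t h1 h2 => by have := hβ t h1 h2; simp only [sfun, if_pos h2]; omega)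
    (by simp [sfun])
    ((algebraMap _ (Localization.Away
        ((Ideal.Quotient.mk (QDet m (sfun m β))) (Emon m (sfun m β))))).comp
      (Ideal.Quotient.mk (QDet m (sfun m β))))
    (fun i j h1 h2 h3 => by
      have hmem : qm m (sfun m β) i j ∈ QDet m (sfun m β) :=
        Ideal.subset_span ⟨i, j, h1, h2, h3, rfl⟩
      rw [RingHom.comp_apply, Ideal.Quotient.eq_zero_iff_mem.mpr hmem, map_zero])
    (by
      rw [RingHom.comp_apply]
      exact IsLocalization.Away.algebraMap_isUnit _)
  exact key p
end

section
/- Let P be the product of all the variables of ℂ[𝗓] and let E := 𝗓_{0,0}·𝗓_{2,s_2}·𝗓_{3,s_3}⋯𝗓_{m+1,s_{m+1}}. Then the saturations agree: for every f ∈ ℂ[𝗓], there exists N ∈ ℕ with P^N·f ∈ QDet(𝗓) if and only if there exists N ∈ ℕ with E^N·f ∈ QDet(𝗓); i.e. (QDet(𝗓) : P^∞) = (QDet(𝗓) : E^∞). -/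
open MvPolynomial

-- auxiliary lemmas

lemma Zv_eq_X (m : ℕ) (s : ℕ → ℕ) (i j : ℕ) (hi : i < m + 2) (hj : j < nj m s i) :
    Zv m s i j = X (⟨⟨i, hi⟩, ⟨j, hj⟩⟩ : ZIdx m s) := by
  rw [Zv, zidx, dif_pos ⟨hi, hj⟩]

lemma zidx_fst (m : ℕ) (s : ℕ → ℕ) (i j : ℕ) (hi : i < m + 2) (hj : j < nj m s i) :
    ((zidx m s i j).1 : ℕ) = i := by
  rw [zidx, dif_pos ⟨hi, hj⟩]

lemma qm_mem (m : ℕ) (s : ℕ → ℕ) (i j : ℕ) (h1 : 1 ≤ i) (h2 : i < j) (h3 : j ≤ m + 1) :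
    qm m s i j ∈ QDet m s :=
  Ideal.subset_span ⟨i, j, h1, h2, h3, rfl⟩

lemma key (m : ℕ) (hm : 1 ≤ m) (s : ℕ → ℕ) (hs : ∀ t, 1 ≤ t → t ≤ m → 1 ≤ s t)
    (hsm : s (m + 1) = 0) (p : ZIdx m s) :
    ∃ g : CZ m s, Emon m s - X p * g ∈ QDet m s := by
  obtain ⟨⟨i, hi⟩, ⟨j, hj⟩⟩ := p
  rw [← Zv_eq_X m s i j hi hj]
  by_cases hc0 : i = 0
  · subst hc0
    have hj0 : j = 0 := by simp [nj] at hj; omega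
    subst hj0
    exact ⟨∏ t ∈ Finset.Icc 2 (m + 1), Zv m s t (s t), by
      have : Emon m s - Zv m s 0 0 * ∏ t ∈ Finset.Icc 2 (m + 1), Zv m s t (s t) = 0 := by
        rw [Emon]; ring
      rw [this]; exact Ideal.zero_mem _⟩
  by_cases hcm : i = m + 1
  · subst hcm
    have hj0 : j = 0 := by simp [nj] at hj; omega
    subst hj0
    have hmem : m + 1 ∈ Finset.Icc 2 (m + 1) := Finset.mem_Icc.mpr ⟨by omega, le_refl _⟩
    refine ⟨Zv m s 0 0 * ∏ t ∈ (Finset.Icc 2 (m + 1)).erase (m + 1), Zv m s t (s t), ?_⟩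
    have : Emon m s - Zv m s (m + 1) 0 *
        (Zv m s 0 0 * ∏ t ∈ (Finset.Icc 2 (m + 1)).erase (m + 1), Zv m s t (s t)) = 0 := by
      rw [Emon, ← Finset.mul_prod_erase _ _ hmem, hsm]; ring
    rw [this]; exact Ideal.zero_mem _
  -- now 1 ≤ i ≤ m
  have hi1 : 1 ≤ i := by omega
  have him : i ≤ m := by omega
  have hjs : j ≤ s i := by
    have h1 : nj m s i = s i + 1 := by simp [nj, hc0, hcm]
    have h2 : j < nj m s i := hj
    omega
  have hsi : 1 ≤ s i := hs i hi1 him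
  by_cases htop : j = s i ∧ 2 ≤ i
  · obtain ⟨hjeq, hi2⟩ := htop
    subst hjeq
    have hmem : i ∈ Finset.Icc 2 (m + 1) := Finset.mem_Icc.mpr ⟨hi2, by omega⟩
    refine ⟨Zv m s 0 0 * ∏ t ∈ (Finset.Icc 2 (m + 1)).erase i, Zv m s t (s t), ?_⟩
    have : Emon m s - Zv m s i (s i) *
        (Zv m s 0 0 * ∏ t ∈ (Finset.Icc 2 (m + 1)).erase i, Zv m s t (s t)) = 0 := by
      rw [Emon, ← Finset.mul_prod_erase _ _ hmem]; ring
    rw [this]; exact Ideal.zero_mem _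
  -- main case: use q_{1, i+1}
  · have hq : qm m s 1 (i + 1) ∈ QDet m s := qm_mem m s 1 (i + 1) le_rfl (by omega) (by omega)
    have hq_eq : qm m s 1 (i + 1) = Zv m s 0 0 * Zv m s (i + 1) (s (i + 1)) -
        Zv m s 1 (s 1) * (∏ t ∈ Finset.Icc 1 i, Wq m s t) * Zv m s i 0 := by
      simp [qm]
    have hB : ∃ h : CZ m s,
        Zv m s 1 (s 1) * (∏ t ∈ Finset.Icc 1 i, Wq m s t) * Zv m s i 0 = Zv m s i j * h := by
      by_cases hj0 : j = 0
      · subst hj0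
        exact ⟨Zv m s 1 (s 1) * ∏ t ∈ Finset.Icc 1 i, Wq m s t, by ring⟩
      by_cases hone : i = 1 ∧ j = s i
      · obtain ⟨h1, h2⟩ := hone
        subst h1; subst h2
        exact ⟨(∏ t ∈ Finset.Icc 1 1, Wq m s t) * Zv m s 1 0, by ring⟩
      · -- 1 ≤ j ≤ s i - 1
        have hjlt : j < s i := by
          rcases Nat.lt_or_ge i 2 with h | h
          · have : i = 1 := by omega
            subst this
            rcases Nat.lt_or_ge j (s 1) with h' | h'
            · exact h'
            · exact absurd ⟨rfl, by omega⟩ hone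
          · rcases Nat.lt_or_ge j (s i) with h' | h'
            · exact h'
            · exact absurd ⟨by omega, h⟩ htop
        have hjmem : j ∈ Finset.Icc 1 (s i - 1) := Finset.mem_Icc.mpr ⟨by omega, by omega⟩
        have himem : i ∈ Finset.Icc 1 i := Finset.mem_Icc.mpr ⟨hi1, le_rfl⟩
        refine ⟨Zv m s 1 (s 1) * ((∏ u ∈ (Finset.Icc 1 (s i - 1)).erase j, Zv m s i u) *
          ∏ t ∈ (Finset.Icc 1 i).erase i, Wq m s t) * Zv m s i 0, ?_⟩
        rw [← Finset.mul_prod_erase _ _ himem, Wq, ← Finset.mul_prod_erase _ _ hjmem]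
        ring
    obtain ⟨h, hBh⟩ := hB
    have hmem : i + 1 ∈ Finset.Icc 2 (m + 1) := Finset.mem_Icc.mpr ⟨by omega, by omega⟩
    refine ⟨h * ∏ t ∈ (Finset.Icc 2 (m + 1)).erase (i + 1), Zv m s t (s t), ?_⟩
    have key_eq : Emon m s - Zv m s i j *
        (h * ∏ t ∈ (Finset.Icc 2 (m + 1)).erase (i + 1), Zv m s t (s t)) =
        qm m s 1 (i + 1) * ∏ t ∈ (Finset.Icc 2 (m + 1)).erase (i + 1), Zv m s t (s t) := by
      rw [Emon, ← Finset.mul_prod_erase _ _ hmem, hq_eq, hBh]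
      ring
    rw [key_eq]
    exact Ideal.mul_mem_right _ _ hq

lemma Emon_dvd_P (m : ℕ) (hm : 1 ≤ m) (s : ℕ → ℕ) (hsm : s (m + 1) = 0) :
    ∃ C : CZ m s, (∏ p : ZIdx m s, X p) = Emon m s * C := by
  have hvalid : ∀ t ∈ Finset.Icc 2 (m + 1), t < m + 2 ∧ s t < nj m s t := by
    intro t ht
    rw [Finset.mem_Icc] at ht
    constructor
    · omega
    · by_cases h : t = m + 1
      · subst h; simp [nj, hsm]
      · have : nj m s t = s t + 1 := by simp [nj]; omega
        omega
  set S : Finset (ZIdx m s) :=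
    insert (zidx m s 0 0) ((Finset.Icc 2 (m + 1)).image fun t => zidx m s t (s t)) with hS
  have h00 : (0 : ℕ) < m + 2 ∧ (0 : ℕ) < nj m s 0 := ⟨by omega, by simp [nj]⟩
  have hnot : zidx m s 0 0 ∉ (Finset.Icc 2 (m + 1)).image fun t => zidx m s t (s t) := by
    intro hmemi
    obtain ⟨t, ht, heq⟩ := Finset.mem_image.mp hmemi
    have h1 := zidx_fst m s t (s t) (hvalid t ht).1 (hvalid t ht).2
    have h2 := zidx_fst m s 0 0 h00.1 h00.2
    rw [heq] at h1
    rw [Finset.mem_Icc] at ht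
    omega
  have hinj : ∀ x ∈ Finset.Icc 2 (m + 1), ∀ y ∈ Finset.Icc 2 (m + 1),
      zidx m s x (s x) = zidx m s y (s y) → x = y := by
    intro x hx y hy hxy
    have h1 := zidx_fst m s x (s x) (hvalid x hx).1 (hvalid x hx).2
    have h2 := zidx_fst m s y (s y) (hvalid y hy).1 (hvalid y hy).2
    rw [hxy] at h1
    omega
  have hE : Emon m s = ∏ p ∈ S, X p := by
    rw [hS, Finset.prod_insert hnot, Finset.prod_image hinj, Emon]
    rfl
  refine ⟨∏ p ∈ Finset.univ \ S, X p, ?_⟩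
  rw [hE, ← Finset.prod_sdiff (Finset.subset_univ S)]
  ring


/-- with `P` the product of all the variables of `ℂ[𝗓]` and
`E = 𝗓_{0,0}·𝗓_{2,s_2}⋯𝗓_{m+1,s_{m+1}}`, the saturations of `QDet(𝗓)` at `P` and at `E`
agree: `(QDet(𝗓) : P^∞) = (QDet(𝗓) : E^∞)`. -/
theorem saturation_P_eq_saturation_E
    (m : ℕ) (hm : 1 ≤ m) (β : ℕ → ℕ) (hβ : ∀ t, 1 ≤ t → t ≤ m → 2 ≤ β t) :
    ∀ f : CZ m (sfun m β),
      (∃ N : ℕ, (∏ p : ZIdx m (sfun m β), X p) ^ N * f ∈ QDet m (sfun m β)) ↔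
      (∃ N : ℕ, (Emon m (sfun m β)) ^ N * f ∈ QDet m (sfun m β)) := by
  intro f
  have hs : ∀ t, 1 ≤ t → t ≤ m → 1 ≤ sfun m β t := by
    intro t h1 h2
    have := hβ t h1 h2
    simp only [sfun, if_pos h2]
    omega
  have hsm : sfun m β (m + 1) = 0 := by simp [sfun]
  constructor
  · rintro ⟨N, hN⟩
    set π := Ideal.Quotient.mk (QDet m (sfun m β)) with hπ
    have hkey : ∀ p : ZIdx m (sfun m β), ∃ g : CZ m (sfun m β),
        π (Emon m (sfun m β)) = π (X p) * π g := by
      intro p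
      obtain ⟨g, hg⟩ := key m hm (sfun m β) hs hsm p
      exact ⟨g, by rw [← map_mul]; exact Ideal.Quotient.eq.mpr hg⟩
    choose g hg using hkey
    have hprod : (π (Emon m (sfun m β))) ^ Fintype.card (ZIdx m (sfun m β)) =
        π (∏ p : ZIdx m (sfun m β), X p) * ∏ p : ZIdx m (sfun m β), π (g p) := by
      rw [← Finset.card_univ, ← Finset.prod_const, map_prod, ← Finset.prod_mul_distrib]
      exact Finset.prod_congr rfl fun p _ => hg p
    refine ⟨Fintype.card (ZIdx m (sfun m β)) * N, ?_⟩
    rw [← Ideal.Quotient.eq_zero_iff_mem, map_mul, map_pow, pow_mul, hprod, mul_pow]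
    have hz : π ((∏ p : ZIdx m (sfun m β), X p) ^ N * f) = 0 :=
      Ideal.Quotient.eq_zero_iff_mem.mpr hN
    rw [map_mul, map_pow] at hz
    linear_combination (∏ p : ZIdx m (sfun m β), π (g p)) ^ N * hz
  · rintro ⟨N, hN⟩
    obtain ⟨C, hC⟩ := Emon_dvd_P m hm (sfun m β) hsm
    refine ⟨N, ?_⟩
    rw [hC, mul_pow]
    have heq : Emon m (sfun m β) ^ N * C ^ N * f = C ^ N * (Emon m (sfun m β) ^ N * f) := by
      ring
    rw [heq]
    exact Ideal.mul_mem_left _ _ hN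
end

section
/- With the weight w_i := 𝕚_i + 𝕛_i attached to every variable 𝗓_{i,j} (independent of j), each quasiminor q_{i,j} (1 ≤ i < j ≤ m+1) is weighted homogeneous of degree w_{i−1} + w_j; in particular QDet(𝗓) is a weighted-homogeneous ideal. Equivalently, for all 1 ≤ i < j ≤ m+1 the numerical identity w_{i−1} + w_j = w_i + w_{j−1} + Σ_{t=i}^{j−1}(β_t − 2)·w_t holds. -/
open MvPolynomial

/-- Hirzebruch–Jung continued fraction `[γ_1,…,γ_s] = γ_1 − 1/(γ_2 − 1/(⋯ − 1/γ_s))`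
(with the Mathlib convention `1/0 = 0`, so that `hjcf [γ] = γ`). -/
def hjcf : List ℚ → ℚ
  | [] => 0
  | g :: rest => g - 1 / hjcf rest

/-- The pair `(𝕚_t, 𝕚_{t+1})` of the `𝕚`-series: `𝕚_0 = r`, `𝕚_1 = r − a`,
`𝕚_{t+1} = β_t·𝕚_t − 𝕚_{t−1}`. -/
def ipair (r a : ℕ) (β : ℕ → ℕ) : ℕ → ℤ × ℤ
  | 0 => ((r : ℤ), (r : ℤ) - (a : ℤ))
  | t + 1 => ((ipair r a β t).2, (β (t + 1) : ℤ) * (ipair r a β t).2 - (ipair r a β t).1)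

/-- The pair `(𝕛_t, 𝕛_{t+1})` of the `𝕛`-series: `𝕛_0 = 0`, `𝕛_1 = 1`,
`𝕛_{t+1} = β_t·𝕛_t − 𝕛_{t−1}`. -/
def jpair (β : ℕ → ℕ) : ℕ → ℤ × ℤ
  | 0 => (0, 1)
  | t + 1 => ((jpair β t).2, (β (t + 1) : ℤ) * (jpair β t).2 - (jpair β t).1)

/-- The weight `w_t = 𝕚_t + 𝕛_t`. -/
def wdeg (r a : ℕ) (β : ℕ → ℕ) (t : ℕ) : ℤ := (ipair r a β t).1 + (jpair β t).1

private lemma wrec2 (r a : ℕ) (β : ℕ → ℕ) (t : ℕ) :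
    wdeg r a β (t + 2) = (β (t + 1) : ℤ) * wdeg r a β (t + 1) - wdeg r a β t := by
  simp only [wdeg, ipair, jpair]
  ring

private lemma wrec (r a : ℕ) (β : ℕ → ℕ) (i : ℕ) (hi : 1 ≤ i) :
    wdeg r a β (i + 1) = (β i : ℤ) * wdeg r a β i - wdeg r a β (i - 1) := by
  obtain ⟨t, rfl⟩ : ∃ t, i = t + 1 := ⟨i - 1, by omega⟩
  rw [Nat.add_sub_cancel]
  exact wrec2 r a β t

private lemma wsum (r a : ℕ) (β : ℕ → ℕ) (i j : ℕ) (hi : 1 ≤ i) (hij : i < j) :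
    wdeg r a β (i - 1) + wdeg r a β j =
      wdeg r a β i + wdeg r a β (j - 1) +
        ∑ t ∈ Finset.Icc i (j - 1), ((β t : ℤ) - 2) * wdeg r a β t := by
  induction j, hij using Nat.le_induction with
  | base =>
    have h := wrec r a β i hi
    rw [Nat.succ_sub_one, Finset.Icc_self, Finset.sum_singleton, Nat.succ_eq_add_one, h]
    ring
  | succ j hj ih =>
    have h := wrec r a β j (by omega)
    have hsplit : ∑ t ∈ Finset.Icc i j, ((β t : ℤ) - 2) * wdeg r a β t =
        (∑ t ∈ Finset.Icc i (j - 1), ((β t : ℤ) - 2) * wdeg r a β t) +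
          ((β j : ℤ) - 2) * wdeg r a β j := by
      have : j = (j - 1) + 1 := by omega
      rw [this, Finset.sum_Icc_succ_top (by omega), ← this]
    simp only [Nat.add_sub_cancel]
    rw [hsplit, h]
    have := ih
    linarith

private lemma nj_pos (m : ℕ) (s : ℕ → ℕ) (i : ℕ) : 0 < nj m s i := by
  rw [nj]; split <;> omega

private lemma zv_hom (m : ℕ) (s : ℕ → ℕ) (W : ℕ → ℤ) {i j : ℕ}
    (hi : i < m + 2) (hj : j < nj m s i) :
    IsWeightedHomogeneous (fun p : ZIdx m s => W p.1.val) (Zv m s i j) (W i) := by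
  have hz : zidx m s i j = ⟨⟨i, hi⟩, ⟨j, hj⟩⟩ := dif_pos ⟨hi, hj⟩
  unfold Zv
  rw [hz]
  exact isWeightedHomogeneous_X (R := ℂ) (fun p : ZIdx m s => W p.1.val) ⟨⟨i, hi⟩, ⟨j, hj⟩⟩

private lemma qm_hom (m : ℕ) (s : ℕ → ℕ) (W : ℕ → ℤ) (i j : ℕ) (hi : 1 ≤ i) (hij : i < j)
    (hjm : j ≤ m + 1) (hsj : s (m + 1) = 0)
    (hdeg : W i + (∑ t ∈ Finset.Icc i (j - 1), ((s t - 1 : ℕ) : ℤ) * W t) + W (j - 1)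
      = W (i - 1) + W j) :
    IsWeightedHomogeneous (fun p : ZIdx m s => W p.1.val) (qm m s i j) (W (i - 1) + W j) := by
  set φ := fun p : ZIdx m s => W p.1.val with hφ
  have h1 : IsWeightedHomogeneous φ (Zv m s (i - 1) 0 * Zv m s j (s j)) (W (i - 1) + W j) := by
    refine (zv_hom m s W (by omega) (nj_pos m s (i - 1))).mul (zv_hom m s W (by omega) ?_)
    rcases eq_or_lt_of_le hjm with h | h
    · rw [h, hsj, nj, if_pos (Or.inr rfl)]; omega
    · rw [nj, if_neg (by omega)]; omega
  have h2 : IsWeightedHomogeneous φ (∏ t ∈ Finset.Icc i (j - 1), Wq m s t)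
      (∑ t ∈ Finset.Icc i (j - 1), ((s t - 1 : ℕ) : ℤ) * W t) := by
    apply IsWeightedHomogeneous.prod
    intro t ht
    rw [Finset.mem_Icc] at ht
    have heq : ((s t - 1 : ℕ) : ℤ) * W t = ∑ _u ∈ Finset.Icc 1 (s t - 1), W t := by
      rw [Finset.sum_const, Nat.card_Icc]
      simp [nsmul_eq_mul]
    rw [heq, Wq]
    apply IsWeightedHomogeneous.prod
    intro u hu
    rw [Finset.mem_Icc] at hu
    exact zv_hom m s W (by omega) (by rw [nj, if_neg (by omega)]; omega)
  have h3 : IsWeightedHomogeneous φ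
      (Zv m s i (s i) * (∏ t ∈ Finset.Icc i (j - 1), Wq m s t) * Zv m s (j - 1) 0)
      (W (i - 1) + W j) := by
    rw [← hdeg]
    exact ((zv_hom m s W (by omega)
      (by rw [nj, if_neg (by omega)]; omega)).mul h2).mul
      (zv_hom m s W (by omega) (nj_pos m s (j - 1)))
  rw [qm, ← mem_weightedHomogeneousSubmodule]
  rw [← mem_weightedHomogeneousSubmodule] at h1 h3
  exact Submodule.sub_mem _ h1 h3

/-- giving every variable `𝗓_{i,j}` the weight `w_i = 𝕚_i + 𝕛_i`, each
quasiminor `q_{i,j}` is weighted homogeneous of degree `w_{i−1} + w_j` (so `QDet(𝗓)` is a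
weighted-homogeneous ideal); equivalently, the numerical identity
`w_{i−1} + w_j = w_i + w_{j−1} + Σ_{t=i}^{j−1}(β_t − 2)·w_t` holds for `1 ≤ i < j ≤ m+1`. -/
theorem quasiminors_weighted_homogeneous
    (r a : ℕ) (ha : 1 ≤ a) (hra : a < r) (hcop : Nat.Coprime r a)
    (m : ℕ) (βs : List ℕ)
    (hβlen : βs.length = m) (hβ2 : ∀ x ∈ βs, 2 ≤ x)
    (hβcf : hjcf (βs.map (fun x => (x : ℚ))) = (r : ℚ) / ((r : ℚ) - (a : ℚ))) :
    (∀ i j : ℕ, 1 ≤ i → i < j → j ≤ m + 1 →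
      MvPolynomial.IsWeightedHomogeneous
        (fun p : ZIdx m (fun t => βs.getD (t - 1) 0 - 1) =>
          wdeg r a (fun t => βs.getD (t - 1) 0) p.1.val)
        (qm m (fun t => βs.getD (t - 1) 0 - 1) i j)
        (wdeg r a (fun t => βs.getD (t - 1) 0) (i - 1) +
          wdeg r a (fun t => βs.getD (t - 1) 0) j)) ∧
    (∀ i j : ℕ, 1 ≤ i → i < j → j ≤ m + 1 →
      wdeg r a (fun t => βs.getD (t - 1) 0) (i - 1) +
          wdeg r a (fun t => βs.getD (t - 1) 0) j =
        wdeg r a (fun t => βs.getD (t - 1) 0) i +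
          wdeg r a (fun t => βs.getD (t - 1) 0) (j - 1) +
          ∑ t ∈ Finset.Icc i (j - 1),
            ((βs.getD (t - 1) 0 : ℤ) - 2) * wdeg r a (fun t => βs.getD (t - 1) 0) t) := by
  set β : ℕ → ℕ := fun t => βs.getD (t - 1) 0 with hβdef
  have hβge : ∀ t, 1 ≤ t → t ≤ m → 2 ≤ β t := by
    intro t h1 h2
    have hlt : t - 1 < βs.length := by omega
    have : β t = βs[t - 1] := List.getD_eq_getElem βs 0 hlt
    rw [this]
    exact hβ2 _ (List.getElem_mem hlt)
  refine ⟨fun i j hi hij hjm => ?_, fun i j hi hij hjm => wsum r a β i j hi hij⟩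
  apply qm_hom m (fun t => β t - 1) (wdeg r a β) i j hi hij hjm
  · show β (m + 1) - 1 = 0
    have : β (m + 1) = 0 := List.getD_eq_default βs 0 (by omega)
    omega
  · have hsum : ∑ t ∈ Finset.Icc i (j - 1), ((β t - 1 - 1 : ℕ) : ℤ) * wdeg r a β t =
        ∑ t ∈ Finset.Icc i (j - 1), ((β t : ℤ) - 2) * wdeg r a β t := by
      apply Finset.sum_congr rfl
      intro t ht
      rw [Finset.mem_Icc] at ht
      have h2t : 2 ≤ β t := hβge t (by omega) (by omega)
      congr 1
      omega
    rw [hsum]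
    linarith [wsum r a β i j hi hij]
end

section
/- Assume a > 1. If the scalars λ = (λ_{i,j}) satisfy Σ_{j=0}^{β_i−1} λ_{i,j} ≠ 0 for some 1 ≤ i ≤ e−2 (i.e. λ ∉ Δ), then there exists no λ-representation x : Q_1 → ℂ; that is, the representation variety Rep(A_{r,a,λ}, δ) with dimension vector δ = (1,…,1) is empty. -/
/-- Arrows of the quiver of the reconstruction algebra of type `A`:
`Sum.inl v` is the clockwise arrow `c_{v,v-1} : v → v−1` (`c_{0,n} : 0 → n` for `v = 0`),
`Sum.inr (Sum.inl v)` is the anticlockwise arrow `a_{v,v+1} : v → v+1` (`a_{n,0}` for `v = n`),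
`Sum.inr (Sum.inr h)` is the extra arrow `k_{h+1} : l_{h+1} → 0`. -/
abbrev Arrow (n ℓ : ℕ) : Type := Fin (n + 1) ⊕ (Fin (n + 1) ⊕ Fin ℓ)

/-- The clockwise arrow `c_{v,v−1}` (indices mod `n+1`). -/
def cc (n ℓ : ℕ) (v : ℕ) : Arrow n ℓ := Sum.inl (Fin.ofNat (n + 1) v)

/-- The anticlockwise arrow `a_{v,v+1}` (indices mod `n+1`). -/
def aa (n ℓ : ℕ) (v : ℕ) : Arrow n ℓ := Sum.inr (Sum.inl (Fin.ofNat (n + 1) v))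

/-- The arrow `k_h`, with the conventions `k_0 = c_{1,0}` and `k_h = a_{n,0}` for `h > ℓ`
(in particular `k_{ℓ+1} = a_{n,0}`). -/
def kArr (n ℓ : ℕ) (h : ℕ) : Arrow n ℓ :=
  if hh : 1 ≤ h ∧ h ≤ ℓ then Sum.inr (Sum.inr ⟨h - 1, by omega⟩)
  else if h = 0 then cc n ℓ 1 else aa n ℓ n

/-- `x(C_{0,j})`: the value of `x` on the clockwise path from `0` to `j` (for `j ≥ 1`). -/
def xcPath (n ℓ : ℕ) (x : Arrow n ℓ → ℂ) (j : ℕ) : ℂ :=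
  x (cc n ℓ 0) * ∏ v ∈ Finset.Icc (j + 1) n, x (cc n ℓ v)

/-- `x(A_{0,j})`: the value of `x` on the anticlockwise path from `0` to `j` (for `j ≥ 1`). -/
def xaPath (n ℓ : ℕ) (x : Arrow n ℓ → ℂ) (j : ℕ) : ℂ :=
  ∏ v ∈ Finset.range j, x (aa n ℓ v)

/-- A `λ`-representation of dimension vector `(1,…,1)`: a function `x : Q_1 → ℂ` satisfying,
for each `1 ≤ i ≤ e−2 = ℓ+1` (writing `d_i = l_i − l_{i−1}`), the step-`i` relations of the
deformed reconstruction algebra `A_{r,a,λ}`. -/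
def IsLamRep (n ℓ : ℕ) (L : ℕ → ℕ) (β : ℕ → ℕ) (lam : ℕ → ℕ → ℂ)
    (x : Arrow n ℓ → ℂ) : Prop :=
  ∀ i, 1 ≤ i → i ≤ ℓ + 1 →
    ((L i - L (i - 1) = 0 →
      x (kArr n ℓ i) * xcPath n ℓ x (L i)
          - x (kArr n ℓ (i - 1)) * xaPath n ℓ x (L (i - 1)) = lam i 1 ∧
      xaPath n ℓ x (L (i - 1)) * x (kArr n ℓ (i - 1))
          - xcPath n ℓ x (L i) * x (kArr n ℓ i) = lam i 0) ∧
    (0 < L i - L (i - 1) →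
      (x (kArr n ℓ i) * xcPath n ℓ x (L i)
          - x (cc n ℓ (L i)) * x (aa n ℓ (L i - 1)) = lam i (β i - 1)) ∧
      (∀ u, L (i - 1) + 1 ≤ u → u ≤ L i - 1 →
        x (aa n ℓ u) * x (cc n ℓ (u + 1)) - x (cc n ℓ u) * x (aa n ℓ (u - 1))
          = lam i (u - L (i - 1) + 1)) ∧
      (x (aa n ℓ (L (i - 1))) * x (cc n ℓ (L (i - 1) + 1))
          - x (kArr n ℓ (i - 1)) * xaPath n ℓ x (L (i - 1)) = lam i 1) ∧
      (xaPath n ℓ x (L (i - 1)) * x (kArr n ℓ (i - 1))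
          - xcPath n ℓ x (L i) * x (kArr n ℓ i) = lam i 0)))

/-- `λ ∈ Δ`: all the row sums `Σ_{j=0}^{β_i−1} λ_{i,j}` vanish. -/
def InDelta (ℓ : ℕ) (β : ℕ → ℕ) (lam : ℕ → ℕ → ℂ) : Prop :=
  ∀ i, 1 ≤ i → i ≤ ℓ + 1 → ∑ j ∈ Finset.range (β i), lam i j = 0

/-- if `a > 1` and `λ ∉ Δ` (some row sum `Σ_{j=0}^{β_i−1} λ_{i,j}` is nonzero)
then there is no `λ`-representation: `Rep(A_{r,a,λ}, (1,…,1))` is empty. -/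
theorem no_representation_when_lambda_not_in_Delta
    -- the group 1/r(1,a) with r > a ≥ 1 coprime
    (r a : ℕ) (ha : 1 ≤ a) (hra : a < r) (hcop : Nat.Coprime r a)
    -- Hirzebruch–Jung expansions r/a = [α_1,…,α_n], r/(r−a) = [β_1,…,β_m]
    (n m ℓ : ℕ) (αs βs : List ℕ) (hn1 : 1 ≤ n)
    (hαlen : αs.length = n) (hα2 : ∀ x ∈ αs, 2 ≤ x)
    (hαcf : hjcf (αs.map (fun x => (x : ℚ))) = (r : ℚ) / (a : ℚ))
    (hβlen : βs.length = m) (hβ2 : ∀ x ∈ βs, 2 ≤ x)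
    (hβcf : hjcf (βs.map (fun x => (x : ℚ))) = (r : ℚ) / ((r : ℚ) - (a : ℚ)))
    -- ℓ = Σ(α_i − 2), e = ℓ + 3 = m + 2
    (hl : ℓ = ∑ i ∈ Finset.range n, (αs.getD i 0 - 2))
    (hm : m = ℓ + 1)
    -- l_h = tail vertex of k_h: weakly increasing, l_0 = 1, l_{ℓ+1} = n, with
    -- α_i − 2 of the extra arrows having tail i; Riemenschneider duality
    (L : ℕ → ℕ) (hL0 : L 0 = 1) (hLtop : L (ℓ + 1) = n)
    (hLmono : ∀ h₁ h₂, h₁ ≤ h₂ → h₂ ≤ ℓ + 1 → L h₁ ≤ L h₂)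
    (hLrange : ∀ h, 1 ≤ h → h ≤ ℓ → 1 ≤ L h ∧ L h ≤ n)
    (hmult : ∀ i, 1 ≤ i → i ≤ n →
      ((Finset.Icc 1 ℓ).filter (fun h => L h = i)).card = αs.getD (i - 1) 0 - 2)
    (hdual : ∀ t, 1 ≤ t → t ≤ m → βs.getD (t - 1) 0 = L t - L (t - 1) + 2)
    -- a > 1
    (ha1 : 1 < a)
    -- λ ∉ Δ
    (lam : ℕ → ℕ → ℂ)
    (hlam : ∃ i, 1 ≤ i ∧ i ≤ ℓ + 1 ∧
      ∑ j ∈ Finset.range (βs.getD (i - 1) 0), lam i j ≠ 0) :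
    ¬ ∃ x : Arrow n ℓ → ℂ, IsLamRep n ℓ L (fun t => βs.getD (t - 1) 0) lam x := by
  rintro ⟨x, hx⟩
  obtain ⟨i, hi1, hi2, hne⟩ := hlam
  have hβ : βs.getD (i - 1) 0 = L i - L (i - 1) + 2 := hdual i hi1 (by omega)
  have hLle : L (i - 1) ≤ L i := hLmono (i - 1) i (by omega) hi2
  rw [hβ] at hne
  have hxi := hx i hi1 hi2
  rcases Nat.eq_zero_or_pos (L i - L (i - 1)) with h0 | hd
  · obtain ⟨e1, e0⟩ := hxi.1 h0
    rw [h0] at hne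
    apply hne
    rw [show (0 + 2 : ℕ) = 2 from rfl, Finset.sum_range_succ, Finset.sum_range_one]
    linear_combination -e0 - e1
  · obtain ⟨eTop, eMid, e1, e0⟩ := hxi.2 hd
    simp only [hβ] at eTop
    have key : ∀ s, s ≤ L i - L (i - 1) - 1 →
        ∑ j ∈ Finset.range (s + 2), lam i j =
          x (aa n ℓ (L (i - 1) + s)) * x (cc n ℓ (L (i - 1) + s + 1))
            - xcPath n ℓ x (L i) * x (kArr n ℓ i) := by
      intro s
      induction s with
      | zero =>
        intro _
        rw [show (0 + 2 : ℕ) = 2 from rfl, Finset.sum_range_succ, Finset.sum_range_one]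
        simp only [Nat.add_zero]
        linear_combination -e0 - e1
      | succ s ih =>
        intro hs
        have ihv := ih (by omega)
        rw [Finset.sum_range_succ, ihv]
        have emid := eMid (L (i - 1) + s + 1) (by omega) (by omega)
        rw [show L (i - 1) + s + 1 - 1 = L (i - 1) + s from by omega,
          show L (i - 1) + s + 1 - L (i - 1) + 1 = s + 2 from by omega] at emid
        show _ = x (aa n ℓ (L (i - 1) + s + 1)) * x (cc n ℓ (L (i - 1) + s + 1 + 1))
            - xcPath n ℓ x (L i) * x (kArr n ℓ i)
        linear_combination -emid
    apply hne
    have keyv := key (L i - L (i - 1) - 1) le_rfl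
    rw [show L i - L (i - 1) - 1 + 2 = L i - L (i - 1) + 1 from by omega,
      show L (i - 1) + (L i - L (i - 1) - 1) = L i - 1 from by omega,
      show L i - 1 + 1 = L i from by omega] at keyv
    rw [show L i - L (i - 1) + 2 - 1 = L i - L (i - 1) + 1 from by omega] at eTop
    rw [show L i - L (i - 1) + 2 = (L i - L (i - 1) + 1) + 1 from rfl,
      Finset.sum_range_succ, keyv]
    linear_combination -eTop
end

section
/- Assume a > 1, λ ∈ Δ, and fix t with 1 ≤ t ≤ n−1. The map x ↦ (x(c_{t+1,t}), x(a_{t,t+1})) is a bijection from the set of λ-representations x : Q_1 → ℂ satisfying x(c_{0,n}) = x(c_{n,n−1}) = ⋯ = x(c_{t+2,t+1}) = 1 and x(a_{0,1}) = x(a_{1,2}) = ⋯ = x(a_{t−1,t}) = 1 onto ℂ². (This is the chart W_t of the moduli space of the deformed reconstruction algebra A_{r,a,λ}, and it is isomorphic to affine 2-space.) -/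
namespace ChartW

def kdn (lam : ℕ → ℕ → ℂ) (M : ℕ) (P K0 : ℂ) : ℕ → ℂ
  | 0 => K0
  | s+1 => kdn lam M P K0 s * P - lam (M - s) 1

def kup (lam : ℕ → ℕ → ℂ) (I : ℕ) (Q K0 : ℂ) : ℕ → ℂ
  | 0 => K0
  | s+1 => kup lam I Q K0 s * Q + lam (I + s + 1) 1

def Iu (ℓ : ℕ) (L : ℕ → ℕ) (u : ℕ) : ℕ :=
  Nat.find (⟨ℓ + 2, Or.inr le_rfl⟩ : ∃ i, (1 ≤ i ∧ u ≤ L i) ∨ ℓ + 2 ≤ i)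

def Mu (ℓ : ℕ) (L : ℕ → ℕ) (u : ℕ) : ℕ := Iu ℓ L (u + 1) - 1

lemma Iu_spec (ℓ : ℕ) (L : ℕ → ℕ) (u : ℕ) :
    (1 ≤ Iu ℓ L u ∧ u ≤ L (Iu ℓ L u)) ∨ ℓ + 2 ≤ Iu ℓ L u :=
  Nat.find_spec (⟨ℓ + 2, Or.inr le_rfl⟩ : ∃ i, (1 ≤ i ∧ u ≤ L i) ∨ ℓ + 2 ≤ i)

lemma Iu_min {ℓ : ℕ} {L : ℕ → ℕ} {u m : ℕ} (hm : m < Iu ℓ L u) :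
    ¬((1 ≤ m ∧ u ≤ L m) ∨ ℓ + 2 ≤ m) :=
  Nat.find_min (⟨ℓ + 2, Or.inr le_rfl⟩ : ∃ i, (1 ≤ i ∧ u ≤ L i) ∨ ℓ + 2 ≤ i) hm

lemma Iu_pos {ℓ : ℕ} {L : ℕ → ℕ} (u : ℕ) : 1 ≤ Iu ℓ L u := by
  rcases Iu_spec ℓ L u with h | h
  · exact h.1
  · omega

lemma Iu_le' {ℓ : ℕ} {L : ℕ → ℕ} (u : ℕ) : Iu ℓ L u ≤ ℓ + 2 :=
  Nat.find_min' _ (Or.inr le_rfl)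

lemma L_lt_of_lt_Iu {ℓ : ℕ} {L : ℕ → ℕ} {u i : ℕ} (h1 : 1 ≤ i) (h2 : i < Iu ℓ L u) :
    L i < u := by
  have h := Iu_min h2
  push_neg at h
  have := h.1 h1
  omega

lemma Mu_add_one {ℓ : ℕ} {L : ℕ → ℕ} (u : ℕ) : Mu ℓ L u + 1 = Iu ℓ L (u + 1) := by
  have := Iu_pos (ℓ := ℓ) (L := L) (u + 1); unfold Mu; omega

structure Good (n ℓ t : ℕ) (L : ℕ → ℕ) : Prop where
  hL0 : L 0 = 1
  hLtop : L (ℓ + 1) = n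
  mono : ∀ h₁ h₂, h₁ ≤ h₂ → h₂ ≤ ℓ + 1 → L h₁ ≤ L h₂
  range : ∀ h, 1 ≤ h → h ≤ ℓ → 1 ≤ L h ∧ L h ≤ n
  ht1 : 1 ≤ t
  htn : t + 1 ≤ n

namespace Good

variable {n ℓ t : ℕ} {L : ℕ → ℕ} (G : Good n ℓ t L)
include G

lemma Lle : ∀ i, i ≤ ℓ + 1 → L i ≤ n := by
  intro i hi
  have hn := G.htn
  rcases Nat.eq_zero_or_pos i with h | h
  · subst h; rw [G.hL0]; omega
  · rcases eq_or_lt_of_le hi with h2 | h2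
    · rw [h2, G.hLtop]
    · exact (G.range i h (by omega)).2

lemma Lge : ∀ i, i ≤ ℓ + 1 → 1 ≤ L i := by
  intro i hi
  have hn := G.htn
  rcases Nat.eq_zero_or_pos i with h | h
  · subst h; rw [G.hL0]
  · rcases eq_or_lt_of_le hi with h2 | h2
    · rw [h2, G.hLtop]; omega
    · exact (G.range i h (by omega)).1

lemma Iu_le {u : ℕ} (hu : u ≤ n) : Iu ℓ L u ≤ ℓ + 1 :=
  Nat.find_min' _ (Or.inl ⟨by omega, by rw [G.hLtop]; exact hu⟩)

lemma le_L_Iu {u : ℕ} (hu : u ≤ n) : u ≤ L (Iu ℓ L u) := by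
  rcases Iu_spec ℓ L u with h | h
  · exact h.2
  · have := G.Iu_le hu; omega

omit G in
lemma Iu_eq {u i : ℕ} (h1 : 1 ≤ i) (h2 : i ≤ ℓ + 1) (h3 : u ≤ L i)
    (h4 : ∀ i', 1 ≤ i' → i' < i → L i' < u) : Iu ℓ L u = i := by
  refine le_antisymm (Nat.find_min' _ (Or.inl ⟨h1, h3⟩)) ?_
  by_contra hc
  push_neg at hc
  have h0 := Iu_pos (ℓ := ℓ) (L := L) u
  have h6 := h4 _ h0 hc
  rcases Iu_spec ℓ L u with h | h <;> omega

lemma L_le_of_le_Mu {u i : ℕ} (hu : 1 ≤ u) (hi : i ≤ Mu ℓ L u) : L i ≤ u := by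
  rcases Nat.eq_zero_or_pos i with h | h
  · subst h; rw [G.hL0]; exact hu
  · have h2 : i < Iu ℓ L (u + 1) := by have := Mu_add_one (ℓ := ℓ) (L := L) u; omega
    have := L_lt_of_lt_Iu h h2
    omega

lemma le_Mu {u i : ℕ} (h2 : i ≤ ℓ + 1) (h3 : L i ≤ u) : i ≤ Mu ℓ L u := by
  by_contra hc
  have hI : Iu ℓ L (u + 1) ≤ i := by
    have := Mu_add_one (ℓ := ℓ) (L := L) u; omega
  rcases Iu_spec ℓ L (u + 1) with h | h
  · have := G.mono _ _ hI h2; omega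
  · omega

omit G in
lemma L_Mu_succ {u : ℕ} (hMu : Mu ℓ L u + 1 ≤ ℓ + 1) : u + 1 ≤ L (Mu ℓ L u + 1) := by
  rcases Iu_spec ℓ L (u + 1) with h | h
  · rw [Mu_add_one]; exact h.2
  · have := Mu_add_one (ℓ := ℓ) (L := L) u; omega

lemma Mu_le_l {u : ℕ} (hu : u + 1 ≤ n) : Mu ℓ L u ≤ ℓ := by
  have h1 := G.Iu_le hu
  have := Mu_add_one (ℓ := ℓ) (L := L) u; omega

lemma Mu_n : Mu ℓ L n = ℓ + 1 := by
  have h : ℓ + 2 ≤ Iu ℓ L (n + 1) := by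
    by_contra hc
    push_neg at hc
    rcases Iu_spec ℓ L (n + 1) with h | h
    · have h2 := G.Lle _ (by omega : Iu ℓ L (n+1) ≤ ℓ + 1)
      omega
    · omega
  have h2 := Iu_le' (ℓ := ℓ) (L := L) (n + 1)
  have := Mu_add_one (ℓ := ℓ) (L := L) n
  omega

omit G in
lemma Mu_ub {u : ℕ} : Mu ℓ L u ≤ ℓ + 1 := by
  have := Iu_le' (ℓ := ℓ) (L := L) (u + 1)
  have := Mu_add_one (ℓ := ℓ) (L := L) u
  omega

lemma L_eq_of_KV {u i : ℕ} (hKV : L (Iu ℓ L u) = u) (h1 : Iu ℓ L u ≤ i) (h2 : i ≤ ℓ + 1)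
    (h3 : i ≤ Mu ℓ L u) (hu : 1 ≤ u) : L i = u :=
  le_antisymm (G.L_le_of_le_Mu hu h3) (hKV ▸ G.mono _ _ h1 h2)

lemma KV_n : L (Iu ℓ L n) = n := by
  have h1 := G.le_L_Iu (le_refl n)
  have h2 := G.Lle _ (G.Iu_le (le_refl n))
  omega

end Good

def Zf (n ℓ : ℕ) (L : ℕ → ℕ) (x : Arrow n ℓ → ℂ) (i j : ℕ) : ℂ :=
  if j = 0 then x (kArr n ℓ (i - 1)) * xaPath n ℓ x (L (i - 1))
  else if j ≤ L i - L (i - 1) then x (aa n ℓ (L (i - 1) + j - 1)) * x (cc n ℓ (L (i - 1) + j))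
  else x (kArr n ℓ i) * xcPath n ℓ x (L i)

def Incs (n ℓ : ℕ) (L : ℕ → ℕ) (lam : ℕ → ℕ → ℂ) (x : Arrow n ℓ → ℂ) : Prop :=
  ∀ i, 1 ≤ i → i ≤ ℓ + 1 → ∀ j, 1 ≤ j → j ≤ L i - L (i - 1) + 1 →
    Zf n ℓ L x i j - Zf n ℓ L x i (j - 1) = lam i j

variable {n ℓ t : ℕ} {L : ℕ → ℕ} {lam : ℕ → ℕ → ℂ} {x : Arrow n ℓ → ℂ}

lemma Zf_zero (i : ℕ) : Zf n ℓ L x i 0 = x (kArr n ℓ (i - 1)) * xaPath n ℓ x (L (i - 1)) := by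
  simp [Zf]

lemma Zf_top {i j : ℕ} (hj : L i - L (i - 1) < j) (hj0 : j ≠ 0) :
    Zf n ℓ L x i j = x (kArr n ℓ i) * xcPath n ℓ x (L i) := by
  rw [Zf, if_neg hj0, if_neg (by omega)]

lemma Zf_mid {i j : ℕ} (hj1 : 1 ≤ j) (hj2 : j ≤ L i - L (i - 1)) :
    Zf n ℓ L x i j = x (aa n ℓ (L (i - 1) + j - 1)) * x (cc n ℓ (L (i - 1) + j)) := by
  rw [Zf, if_neg (by omega), if_pos hj2]

lemma xaPath_succ (u : ℕ) : xaPath n ℓ x (u + 1) = xaPath n ℓ x u * x (aa n ℓ u) :=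
  Finset.prod_range_succ _ _

lemma xcPath_split {u : ℕ} (hu : u < n) :
    xcPath n ℓ x u = x (cc n ℓ (u + 1)) * xcPath n ℓ x (u + 1) := by
  unfold xcPath
  rw [← Finset.Ico_add_one_right_eq_Icc, ← Finset.Ico_add_one_right_eq_Icc,
    Finset.prod_eq_prod_Ico_succ_bot (by omega : u + 1 < n + 1)]
  ring

theorem isLamRep_iff (G : Good n ℓ t L) (β : ℕ → ℕ)
    (hd : ∀ i, 1 ≤ i → i ≤ ℓ + 1 → β i = L i - L (i - 1) + 2)
    (hdelta : InDelta ℓ β lam) :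
    IsLamRep n ℓ L β lam x ↔ Incs n ℓ L lam x := by
  constructor
  · intro h i h1 hi j hj1 hj2
    have hmono : L (i - 1) ≤ L i := G.mono (i - 1) i (by omega) hi
    obtain ⟨hz, hp⟩ := h i h1 hi
    by_cases hd0 : L i - L (i - 1) = 0
    · have hj : j = 1 := by omega
      subst hj
      obtain ⟨e1, _⟩ := hz hd0
      rw [Zf_top (by omega) (by omega), show (1:ℕ) - 1 = 0 from rfl, Zf_zero]
      exact e1
    · have hdpos : 0 < L i - L (i - 1) := Nat.pos_of_ne_zero hd0
      obtain ⟨etop, emid, ebot, _⟩ := hp hdpos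
      by_cases hj1' : j = 1
      · subst hj1'
        rw [Zf_mid le_rfl (by omega), show (1:ℕ) - 1 = 0 from rfl, Zf_zero,
          show L (i-1) + 1 - 1 = L (i-1) from by omega]
        exact ebot
      · by_cases hjd : j ≤ L i - L (i - 1)
        · have e := emid (L (i - 1) + j - 1) (by omega) (by omega)
          rw [show L (i - 1) + j - 1 - L (i - 1) + 1 = j from by omega,
            show L (i - 1) + j - 1 + 1 = L (i - 1) + j from by omega] at e
          rw [Zf_mid (by omega) hjd, Zf_mid (by omega) (by omega),
            show L (i - 1) + (j - 1) = L (i - 1) + j - 1 from by omega]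
          linear_combination e
        · have e := etop
          rw [hd i h1 hi, show L i - L (i - 1) + 2 - 1 = L i - L (i - 1) + 1 from by omega] at e
          have hj : j = L i - L (i - 1) + 1 := by omega
          subst hj
          rw [Zf_top (by omega) (by omega), Zf_mid (by omega) (by omega),
            show L (i - 1) + (L i - L (i - 1) + 1 - 1) = L i from by omega]
          linear_combination e
  · intro h i h1 hi
    have hmono : L (i - 1) ≤ L i := G.mono (i - 1) i (by omega) hi
    have hsum := hdelta i h1 hi
    rw [hd i h1 hi] at hsum
    have tsum : Zf n ℓ L x i (L i - L (i - 1) + 1) - Zf n ℓ L x i 0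
        = ∑ j ∈ Finset.range (L i - L (i - 1) + 1), lam i (j + 1) := by
      rw [← Finset.sum_range_sub (f := fun j => Zf n ℓ L x i j) (n := L i - L (i - 1) + 1)]
      refine Finset.sum_congr rfl ?_
      intro j hj
      rw [Finset.mem_range] at hj
      have e := h i h1 hi (j + 1) (by omega) (by omega)
      rw [show j + 1 - 1 = j from by omega] at e
      exact e
    rw [Finset.sum_range_succ'] at hsum
    constructor
    · intro hd0
      have e1 := h i h1 hi 1 le_rfl (by omega)
      rw [Zf_top (by omega) (by omega), show (1:ℕ) - 1 = 0 from rfl, Zf_zero] at e1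
      have hsum' : lam i 1 + lam i 0 = 0 := by
        rw [hd0] at hsum
        simpa using hsum
      exact ⟨e1, by linear_combination -e1 - hsum'⟩
    · intro hdpos
      rw [Zf_top (by omega) (by omega), Zf_zero] at tsum
      refine ⟨?_, ?_, ?_, ?_⟩
      · have e := h i h1 hi (L i - L (i - 1) + 1) (by omega) (by omega)
        rw [show L i - L (i - 1) + 1 - 1 = L i - L (i - 1) from by omega,
          Zf_top (by omega) (by omega), Zf_mid (by omega) le_rfl,
          show L (i - 1) + (L i - L (i - 1)) = L i from by omega] at e
        rw [hd i h1 hi, show L i - L (i - 1) + 2 - 1 = L i - L (i - 1) + 1 from by omega]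
        linear_combination e
      · intro u hu1 hu2
        have e := h i h1 hi (u - L (i - 1) + 1) (by omega) (by omega)
        rw [show u - L (i - 1) + 1 - 1 = u - L (i - 1) from by omega,
          Zf_mid (by omega) (by omega), Zf_mid (by omega) (by omega),
          show L (i - 1) + (u - L (i - 1) + 1) = u + 1 from by omega,
          show u + 1 - 1 = u from by omega,
          show L (i - 1) + (u - L (i - 1)) = u from by omega] at e
        linear_combination e
      · have e := h i h1 hi 1 le_rfl (by omega)
        rw [show (1:ℕ) - 1 = 0 from rfl, Zf_zero, Zf_mid le_rfl (by omega),
          show L (i - 1) + 1 - 1 = L (i - 1) from by omega] at e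
        exact e
      · linear_combination -tsum - hsum


def lowS (t ℓ : ℕ) (L : ℕ → ℕ) (lam : ℕ → ℕ → ℂ) (c A : ℂ) : ℕ → ℂ × ℂ
  | 0 => (c, 1)
  | m+1 =>
    let p := lowS t ℓ L lam c A m
    let P := p.1 * p.2
    let base := (if m = 0 then A else 1) * p.1
    ((if L (Iu ℓ L (t - m)) = t - m then
        kdn lam (Mu ℓ L (t - m)) P (base - lam (Mu ℓ L (t - m) + 1) 1)
            (Mu ℓ L (t - m) - Iu ℓ L (t - m)) * P
          - lam (Iu ℓ L (t - m)) (t - m - L (Iu ℓ L (t - m) - 1) + 1)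
      else base - lam (Iu ℓ L (t - m)) (t - m - L (Iu ℓ L (t - m) - 1) + 1)), P)

def uppS (t n ℓ : ℕ) (L : ℕ → ℕ) (lam : ℕ → ℕ → ℂ) (c A : ℂ) : ℕ → ℂ × ℂ
  | 0 => (A, 1)
  | m+1 =>
    let p := uppS t n ℓ L lam c A m
    let Q := p.2 * p.1
    let base := (if m = 0 then c else 1) * p.1
    ((if L (Iu ℓ L (t + m + 1)) = t + m + 1 then
        (if t + m + 1 = n then
          kup lam (Iu ℓ L (t + m + 1)) Q
            (base + lam (Iu ℓ L (t + m + 1)) (t + m + 1 - L (Iu ℓ L (t + m + 1) - 1) + 1))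
            (Mu ℓ L (t + m + 1) - Iu ℓ L (t + m + 1))
        else
          kup lam (Iu ℓ L (t + m + 1)) Q
            (base + lam (Iu ℓ L (t + m + 1)) (t + m + 1 - L (Iu ℓ L (t + m + 1) - 1) + 1))
            (Mu ℓ L (t + m + 1) - Iu ℓ L (t + m + 1)) * Q
            + lam (Mu ℓ L (t + m + 1) + 1) 1)
      else base + lam (Iu ℓ L (t + m + 1)) (t + m + 1 - L (Iu ℓ L (t + m + 1) - 1) + 1)), Q)

def kval (t n ℓ : ℕ) (L : ℕ → ℕ) (lam : ℕ → ℕ → ℂ) (c A : ℂ) (h : ℕ) : ℂ :=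
  if L h ≤ t then
    kdn lam (Mu ℓ L (L h)) ((lowS t ℓ L lam c A (t - L h)).1 * (lowS t ℓ L lam c A (t - L h)).2)
      ((if L h = t then A else 1) * (lowS t ℓ L lam c A (t - L h)).1 - lam (Mu ℓ L (L h) + 1) 1)
      (Mu ℓ L (L h) - h)
  else
    kup lam (Iu ℓ L (L h))
      ((uppS t n ℓ L lam c A (L h - t - 1)).2 * (uppS t n ℓ L lam c A (L h - t - 1)).1)
      ((if L h = t + 1 then c else 1) * (uppS t n ℓ L lam c A (L h - t - 1)).1
        + lam (Iu ℓ L (L h)) (L h - L (Iu ℓ L (L h) - 1) + 1))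
      (h - Iu ℓ L (L h))

def sol (t n ℓ : ℕ) (L : ℕ → ℕ) (lam : ℕ → ℕ → ℂ) (c A : ℂ) : Arrow n ℓ → ℂ
  | Sum.inl v => if v.val = 0 ∨ t + 2 ≤ v.val then 1 else (lowS t ℓ L lam c A (t + 1 - v.val)).1
  | Sum.inr (Sum.inl v) => if v.val < t then 1 else (uppS t n ℓ L lam c A (v.val - t)).1
  | Sum.inr (Sum.inr h) => kval t n ℓ L lam c A (h.val + 1)

variable {c A : ℂ}

lemma kdn_succ (lam : ℕ → ℕ → ℂ) (M : ℕ) (P K0 : ℂ) (s : ℕ) :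
    kdn lam M P K0 (s+1) = kdn lam M P K0 s * P - lam (M - s) 1 := rfl

lemma kup_succ (lam : ℕ → ℕ → ℂ) (I : ℕ) (Q K0 : ℂ) (s : ℕ) :
    kup lam I Q K0 (s+1) = kup lam I Q K0 s * Q + lam (I + s + 1) 1 := rfl

lemma lowS_snd (m : ℕ) : (lowS t ℓ L lam c A (m+1)).2
    = (lowS t ℓ L lam c A m).1 * (lowS t ℓ L lam c A m).2 := rfl

lemma uppS_snd (m : ℕ) : (uppS t n ℓ L lam c A (m+1)).2
    = (uppS t n ℓ L lam c A m).2 * (uppS t n ℓ L lam c A m).1 := rfl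

lemma lowS_fst_K {m : ℕ} (hK : L (Iu ℓ L (t - m)) = t - m) :
    (lowS t ℓ L lam c A (m+1)).1
      = kdn lam (Mu ℓ L (t - m))
          ((lowS t ℓ L lam c A m).1 * (lowS t ℓ L lam c A m).2)
          ((if m = 0 then A else 1) * (lowS t ℓ L lam c A m).1 - lam (Mu ℓ L (t - m) + 1) 1)
          (Mu ℓ L (t - m) - Iu ℓ L (t - m))
        * ((lowS t ℓ L lam c A m).1 * (lowS t ℓ L lam c A m).2)
        - lam (Iu ℓ L (t - m)) (t - m - L (Iu ℓ L (t - m) - 1) + 1) := by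
  show (if L (Iu ℓ L (t - m)) = t - m then _ else _) = _
  rw [if_pos hK]

lemma lowS_fst_nK {m : ℕ} (hK : ¬ (L (Iu ℓ L (t - m)) = t - m)) :
    (lowS t ℓ L lam c A (m+1)).1
      = (if m = 0 then A else 1) * (lowS t ℓ L lam c A m).1
        - lam (Iu ℓ L (t - m)) (t - m - L (Iu ℓ L (t - m) - 1) + 1) := by
  show (if L (Iu ℓ L (t - m)) = t - m then _ else _) = _
  rw [if_neg hK]

lemma uppS_fst_K_n {m : ℕ} (hK : L (Iu ℓ L (t + m + 1)) = t + m + 1) (hn : t + m + 1 = n) :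
    (uppS t n ℓ L lam c A (m+1)).1
      = kup lam (Iu ℓ L (t + m + 1))
          ((uppS t n ℓ L lam c A m).2 * (uppS t n ℓ L lam c A m).1)
          ((if m = 0 then c else 1) * (uppS t n ℓ L lam c A m).1
            + lam (Iu ℓ L (t + m + 1)) (t + m + 1 - L (Iu ℓ L (t + m + 1) - 1) + 1))
          (Mu ℓ L (t + m + 1) - Iu ℓ L (t + m + 1)) := by
  show (if L (Iu ℓ L (t + m + 1)) = t + m + 1 then _ else _) = _
  rw [if_pos hK, if_pos hn]

lemma uppS_fst_K {m : ℕ} (hK : L (Iu ℓ L (t + m + 1)) = t + m + 1) (hn : ¬ (t + m + 1 = n)) :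
    (uppS t n ℓ L lam c A (m+1)).1
      = kup lam (Iu ℓ L (t + m + 1))
          ((uppS t n ℓ L lam c A m).2 * (uppS t n ℓ L lam c A m).1)
          ((if m = 0 then c else 1) * (uppS t n ℓ L lam c A m).1
            + lam (Iu ℓ L (t + m + 1)) (t + m + 1 - L (Iu ℓ L (t + m + 1) - 1) + 1))
          (Mu ℓ L (t + m + 1) - Iu ℓ L (t + m + 1))
        * ((uppS t n ℓ L lam c A m).2 * (uppS t n ℓ L lam c A m).1)
        + lam (Mu ℓ L (t + m + 1) + 1) 1 := by
  show (if L (Iu ℓ L (t + m + 1)) = t + m + 1 then _ else _) = _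
  rw [if_pos hK, if_neg hn]

lemma uppS_fst_nK {m : ℕ} (hK : ¬ (L (Iu ℓ L (t + m + 1)) = t + m + 1)) :
    (uppS t n ℓ L lam c A (m+1)).1
      = (if m = 0 then c else 1) * (uppS t n ℓ L lam c A m).1
        + lam (Iu ℓ L (t + m + 1)) (t + m + 1 - L (Iu ℓ L (t + m + 1) - 1) + 1) := by
  show (if L (Iu ℓ L (t + m + 1)) = t + m + 1 then _ else _) = _
  rw [if_neg hK]

lemma kval_low_def {h : ℕ} (hh : L h ≤ t) :
    kval t n ℓ L lam c A h
      = kdn lam (Mu ℓ L (L h))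
          ((lowS t ℓ L lam c A (t - L h)).1 * (lowS t ℓ L lam c A (t - L h)).2)
          ((if L h = t then A else 1) * (lowS t ℓ L lam c A (t - L h)).1
            - lam (Mu ℓ L (L h) + 1) 1)
          (Mu ℓ L (L h) - h) := by
  rw [kval, if_pos hh]

lemma kval_up_def {h : ℕ} (hh : ¬ (L h ≤ t)) :
    kval t n ℓ L lam c A h
      = kup lam (Iu ℓ L (L h))
          ((uppS t n ℓ L lam c A (L h - t - 1)).2 * (uppS t n ℓ L lam c A (L h - t - 1)).1)
          ((if L h = t + 1 then c else 1) * (uppS t n ℓ L lam c A (L h - t - 1)).1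
            + lam (Iu ℓ L (L h)) (L h - L (Iu ℓ L (L h) - 1) + 1))
          (h - Iu ℓ L (L h)) := by
  rw [kval, if_neg hh]

-- value lemmas for sol
lemma sol_cc {v : ℕ} (hv : v ≤ n) :
    sol t n ℓ L lam c A (cc n ℓ v)
      = if v = 0 ∨ t + 2 ≤ v then 1 else (lowS t ℓ L lam c A (t + 1 - v)).1 := by
  have hval : ((Fin.ofNat (n+1) v : Fin (n+1)) : ℕ) = v := by
    rw [Fin.val_ofNat]; exact Nat.mod_eq_of_lt (by omega)
  show (match (Sum.inl (Fin.ofNat (n+1) v) : Arrow n ℓ) with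
    | Sum.inl v => if v.val = 0 ∨ t + 2 ≤ v.val then 1 else (lowS t ℓ L lam c A (t + 1 - v.val)).1
    | Sum.inr (Sum.inl v) => if v.val < t then 1 else (uppS t n ℓ L lam c A (v.val - t)).1
    | Sum.inr (Sum.inr h) => kval t n ℓ L lam c A (h.val + 1)) = _
  simp only [hval]

lemma sol_aa {v : ℕ} (hv : v ≤ n) :
    sol t n ℓ L lam c A (aa n ℓ v)
      = if v < t then 1 else (uppS t n ℓ L lam c A (v - t)).1 := by
  have hval : ((Fin.ofNat (n+1) v : Fin (n+1)) : ℕ) = v := by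
    rw [Fin.val_ofNat]; exact Nat.mod_eq_of_lt (by omega)
  show (match (Sum.inr (Sum.inl (Fin.ofNat (n+1) v)) : Arrow n ℓ) with
    | Sum.inl v => if v.val = 0 ∨ t + 2 ≤ v.val then 1 else (lowS t ℓ L lam c A (t + 1 - v.val)).1
    | Sum.inr (Sum.inl v) => if v.val < t then 1 else (uppS t n ℓ L lam c A (v.val - t)).1
    | Sum.inr (Sum.inr h) => kval t n ℓ L lam c A (h.val + 1)) = _
  simp only [hval]

lemma kArr_zero : kArr n ℓ 0 = cc n ℓ 1 := by simp [kArr]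

lemma kArr_hi {h : ℕ} (hh : ℓ + 1 ≤ h) : kArr n ℓ h = aa n ℓ n := by
  rw [kArr, dif_neg (by omega), if_neg (by omega)]

lemma sol_k {h : ℕ} (h1 : 1 ≤ h) (h2 : h ≤ ℓ) :
    sol t n ℓ L lam c A (kArr n ℓ h) = kval t n ℓ L lam c A h := by
  rw [kArr, dif_pos ⟨h1, h2⟩]
  show kval t n ℓ L lam c A ((h - 1) + 1) = _
  rw [show h - 1 + 1 = h from by omega]

lemma sol_cc0 : sol t n ℓ L lam c A (cc n ℓ 0) = 1 := by
  rw [sol_cc (Nat.zero_le n), if_pos (Or.inl rfl)]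

lemma sol_cc_hi {v : ℕ} (h2 : t + 2 ≤ v) (hv : v ≤ n) :
    sol t n ℓ L lam c A (cc n ℓ v) = 1 := by
  rw [sol_cc hv, if_pos (Or.inr h2)]

lemma sol_cc_mid {v : ℕ} (hn : t + 1 ≤ n) (h1 : 1 ≤ v) (h2 : v ≤ t + 1) :
    sol t n ℓ L lam c A (cc n ℓ v) = (lowS t ℓ L lam c A (t + 1 - v)).1 := by
  rw [sol_cc (by omega), if_neg (by omega)]

lemma sol_cct (hn : t + 1 ≤ n) : sol t n ℓ L lam c A (cc n ℓ (t + 1)) = c := by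
  rw [sol_cc_mid hn (by omega) le_rfl, show t + 1 - (t + 1) = 0 from by omega]
  rfl

lemma sol_cc_up {u : ℕ} (h1 : t + 1 ≤ u) (hu : u ≤ n) :
    sol t n ℓ L lam c A (cc n ℓ u) = if u = t + 1 then c else 1 := by
  rcases eq_or_lt_of_le h1 with h | h
  · rw [if_pos h.symm, ← h, sol_cct (by omega)]
  · rw [if_neg (by omega), sol_cc_hi (by omega) hu]

lemma sol_aa_up {v : ℕ} (h1 : t ≤ v) (hv : v ≤ n) :
    sol t n ℓ L lam c A (aa n ℓ v) = (uppS t n ℓ L lam c A (v - t)).1 := by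
  rw [sol_aa hv, if_neg (by omega)]

lemma sol_aat (hn : t ≤ n) : sol t n ℓ L lam c A (aa n ℓ t) = A := by
  rw [sol_aa_up le_rfl hn, Nat.sub_self]
  rfl

lemma sol_aa_lowt {u : ℕ} (hu : u ≤ t) (hn : t ≤ n) :
    sol t n ℓ L lam c A (aa n ℓ u) = if u = t then A else 1 := by
  rcases eq_or_lt_of_le hu with h | h
  · rw [if_pos h, h, sol_aat hn]
  · rw [if_neg (by omega), sol_aa (by omega), if_pos h]

lemma sol_xaPath_low {u : ℕ} (hu : u ≤ t) (hn : t ≤ n) :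
    xaPath n ℓ (sol t n ℓ L lam c A) u = 1 := by
  refine Finset.prod_eq_one ?_
  intro v hv
  rw [Finset.mem_range] at hv
  rw [sol_aa (by omega), if_pos (by omega)]

lemma sol_xcPath_hi {u : ℕ} (h1 : t + 1 ≤ u) :
    xcPath n ℓ (sol t n ℓ L lam c A) u = 1 := by
  unfold xcPath
  rw [sol_cc0, one_mul]
  refine Finset.prod_eq_one ?_
  intro v hv
  rw [Finset.mem_Icc] at hv
  exact sol_cc_hi (by omega) (by omega)

lemma sol_xaPath_eq (G : Good n ℓ t L) :
    ∀ m, t + m ≤ n → xaPath n ℓ (sol t n ℓ L lam c A) (t + m) = (uppS t n ℓ L lam c A m).2 := by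
  intro m
  induction m with
  | zero => intro _; rw [Nat.add_zero, sol_xaPath_low le_rfl (by have := G.htn; omega)]; rfl
  | succ m ih =>
    intro hm
    rw [show t + (m + 1) = (t + m) + 1 from by omega, xaPath_succ, ih (by omega),
      sol_aa_up (by omega) (by omega), show t + m - t = m from by omega, uppS_snd]

lemma sol_xcPath_eq (G : Good n ℓ t L) :
    ∀ m, m ≤ t → xcPath n ℓ (sol t n ℓ L lam c A) (t + 1 - m) = (lowS t ℓ L lam c A m).2 := by
  intro m
  induction m with
  | zero => intro _; rw [Nat.sub_zero, sol_xcPath_hi le_rfl]; rfl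
  | succ m ih =>
    intro hm
    have hn := G.htn
    rw [show t + 1 - (m + 1) = t - m from by omega,
      xcPath_split (by omega : t - m < n),
      show t - m + 1 = t + 1 - m from by omega, ih (by omega),
      sol_cc_mid (by omega) (by omega) (by omega),
      show t + 1 - (t + 1 - m) = m from by omega, lowS_snd]

lemma sol_k_top (G : Good n ℓ t L) :
    sol t n ℓ L lam c A (kArr n ℓ (ℓ + 1)) = kval t n ℓ L lam c A (ℓ + 1) := by
  have hn := G.htn
  rw [kArr_hi le_rfl, sol_aa_up (by omega) le_rfl,
    show n - t = (n - t - 1) + 1 from by omega,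
    uppS_fst_K_n (by rw [show t + (n - t - 1) + 1 = n from by omega]; exact G.KV_n)
      (by omega),
    kval_up_def (by rw [G.hLtop]; omega)]
  rw [G.hLtop, show t + (n - t - 1) + 1 = n from by omega, G.Mu_n]
  have hif : (if n - t - 1 = 0 then c else (1:ℂ)) = (if n = t + 1 then c else 1) := by
    by_cases h : n - t - 1 = 0
    · rw [if_pos h, if_pos (by omega)]
    · rw [if_neg h, if_neg (by omega)]
  rw [hif]

lemma kdn_zero (lam : ℕ → ℕ → ℂ) (M : ℕ) (P K0 : ℂ) : kdn lam M P K0 0 = K0 := rfl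
lemma kup_zero (lam : ℕ → ℕ → ℂ) (I : ℕ) (Q K0 : ℂ) : kup lam I Q K0 0 = K0 := rfl

lemma lowS_u_nK {u : ℕ} (hu1 : 1 ≤ u) (hu2 : u ≤ t) (hK : ¬ (L (Iu ℓ L u) = u)) :
    (lowS t ℓ L lam c A (t + 1 - u)).1
      = (if u = t then A else 1) * (lowS t ℓ L lam c A (t - u)).1
        - lam (Iu ℓ L u) (u - L (Iu ℓ L u - 1) + 1) := by
  have hre : t - (t - u) = u := by omega
  rw [show t + 1 - u = (t - u) + 1 from by omega,
    lowS_fst_nK (by rw [hre]; exact hK), hre]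
  have hif : (if t - u = 0 then A else (1:ℂ)) = (if u = t then A else 1) := by
    by_cases h : t - u = 0
    · rw [if_pos h, if_pos (by omega)]
    · rw [if_neg h, if_neg (by omega)]
  rw [hif]

lemma lowS_u_K {u : ℕ} (hu1 : 1 ≤ u) (hu2 : u ≤ t) (hK : L (Iu ℓ L u) = u) :
    (lowS t ℓ L lam c A (t + 1 - u)).1
      = kdn lam (Mu ℓ L u)
          ((lowS t ℓ L lam c A (t - u)).1 * (lowS t ℓ L lam c A (t - u)).2)
          ((if u = t then A else 1) * (lowS t ℓ L lam c A (t - u)).1 - lam (Mu ℓ L u + 1) 1)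
          (Mu ℓ L u - Iu ℓ L u)
        * ((lowS t ℓ L lam c A (t - u)).1 * (lowS t ℓ L lam c A (t - u)).2)
        - lam (Iu ℓ L u) (u - L (Iu ℓ L u - 1) + 1) := by
  have hre : t - (t - u) = u := by omega
  rw [show t + 1 - u = (t - u) + 1 from by omega,
    lowS_fst_K (by rw [hre]; exact hK), hre]
  have hif : (if t - u = 0 then A else (1:ℂ)) = (if u = t then A else 1) := by
    by_cases h : t - u = 0
    · rw [if_pos h, if_pos (by omega)]
    · rw [if_neg h, if_neg (by omega)]
  rw [hif]

lemma uppS_u_nK {u : ℕ} (hu1 : t + 1 ≤ u) (hK : ¬ (L (Iu ℓ L u) = u)) :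
    (uppS t n ℓ L lam c A (u - t)).1
      = (if u = t + 1 then c else 1) * (uppS t n ℓ L lam c A (u - t - 1)).1
        + lam (Iu ℓ L u) (u - L (Iu ℓ L u - 1) + 1) := by
  have hre : t + (u - t - 1) + 1 = u := by omega
  conv_lhs => rw [show u - t = (u - t - 1) + 1 from by omega]
  rw [uppS_fst_nK (by rw [hre]; exact hK), hre]
  have hif : (if u - t - 1 = 0 then c else (1:ℂ)) = (if u = t + 1 then c else 1) := by
    by_cases h : u - t - 1 = 0
    · rw [if_pos h, if_pos (by omega)]
    · rw [if_neg h, if_neg (by omega)]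
  rw [hif]

lemma uppS_u_K {u : ℕ} (hu1 : t + 1 ≤ u) (hu2 : u < n) (hK : L (Iu ℓ L u) = u) :
    (uppS t n ℓ L lam c A (u - t)).1
      = kup lam (Iu ℓ L u)
          ((uppS t n ℓ L lam c A (u - t - 1)).2 * (uppS t n ℓ L lam c A (u - t - 1)).1)
          ((if u = t + 1 then c else 1) * (uppS t n ℓ L lam c A (u - t - 1)).1
            + lam (Iu ℓ L u) (u - L (Iu ℓ L u - 1) + 1))
          (Mu ℓ L u - Iu ℓ L u)
        * ((uppS t n ℓ L lam c A (u - t - 1)).2 * (uppS t n ℓ L lam c A (u - t - 1)).1)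
        + lam (Mu ℓ L u + 1) 1 := by
  have hre : t + (u - t - 1) + 1 = u := by omega
  conv_lhs => rw [show u - t = (u - t - 1) + 1 from by omega]
  rw [uppS_fst_K (by rw [hre]; exact hK) (by omega), hre]
  have hif : (if u - t - 1 = 0 then c else (1:ℂ)) = (if u = t + 1 then c else 1) := by
    by_cases h : u - t - 1 = 0
    · rw [if_pos h, if_pos (by omega)]
    · rw [if_neg h, if_neg (by omega)]
  rw [hif]

lemma sol_xcPath_low (G : Good n ℓ t L) {u : ℕ} (h1 : 1 ≤ u) (h2 : u ≤ t + 1) :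
    xcPath n ℓ (sol t n ℓ L lam c A) u = (lowS t ℓ L lam c A (t + 1 - u)).2 := by
  have h := sol_xcPath_eq (lam := lam) (c := c) (A := A) G (t + 1 - u) (by omega)
  rw [show t + 1 - (t + 1 - u) = u from by omega] at h
  exact h

lemma sol_xaPath_up (G : Good n ℓ t L) {u : ℕ} (h1 : t ≤ u) (h2 : u ≤ n) :
    xaPath n ℓ (sol t n ℓ L lam c A) u = (uppS t n ℓ L lam c A (u - t)).2 := by
  have h := sol_xaPath_eq (lam := lam) (c := c) (A := A) G (u - t) (by omega)
  rw [show t + (u - t) = u from by omega] at h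
  exact h

lemma sol_k_any (G : Good n ℓ t L) {i : ℕ} (h1 : 1 ≤ i) (h2 : i ≤ ℓ + 1) :
    sol t n ℓ L lam c A (kArr n ℓ i) = kval t n ℓ L lam c A i := by
  rcases Nat.lt_or_ge i (ℓ + 1) with h | h
  · exact sol_k h1 (by omega)
  · rw [show i = ℓ + 1 from by omega]
    exact sol_k_top G

theorem sol_incs (G : Good n ℓ t L) : Incs n ℓ L lam (sol t n ℓ L lam c A) := by
  have hn := G.htn
  have ht1 := G.ht1
  intro i h1 hi j hj1 hj2
  have hmono : L (i - 1) ≤ L i := G.mono _ _ (by omega) hi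
  have hLile : L i ≤ n := G.Lle i hi
  have hLge : 1 ≤ L (i - 1) := G.Lge _ (by omega)
  by_cases hjd : j ≤ L i - L (i - 1)
  · -- MIDDLE cases: position u = L (i-1) + j - 1
    have hd1 : 1 ≤ L i - L (i - 1) := by omega
    rw [Zf_mid hj1 hjd]
    by_cases hKc : j = 1 ∧ 2 ≤ i
    · -- K-start equation at vertex u = L (i-1)
      obtain ⟨hj1', hi2⟩ := hKc
      subst hj1'
      rw [show L (i - 1) + 1 - 1 = L (i - 1) from by omega, show (1:ℕ) - 1 = 0 from rfl,
        Zf_zero, sol_k (by omega) (by omega)]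
      have hIule : Iu ℓ L (L (i - 1)) ≤ i - 1 := Nat.find_min' _ (Or.inl ⟨by omega, le_rfl⟩)
      have hKV : L (Iu ℓ L (L (i - 1))) = L (i - 1) := by
        have h2 := G.le_L_Iu (u := L (i - 1)) (by omega)
        have h3 := G.mono _ _ hIule (by omega)
        omega
      have hMu : Mu ℓ L (L (i - 1)) = i - 1 := by
        have h4 : i - 1 ≤ Mu ℓ L (L (i - 1)) := G.le_Mu (by omega) le_rfl
        rcases Nat.lt_or_ge (Mu ℓ L (L (i - 1))) i with hc | hc
        · omega
        · have h6 := G.L_le_of_le_Mu (u := L (i - 1)) (by omega) hc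
          omega
      by_cases hut : L (i - 1) ≤ t
      · rw [kval_low_def hut, hMu, show i - 1 - (i - 1) = 0 from by omega, kdn_zero,
          sol_xaPath_low hut (by omega), mul_one, sol_aa_lowt hut (by omega),
          sol_cc_mid (by omega) (by omega) (by omega),
          show t + 1 - (L (i - 1) + 1) = t - L (i - 1) from by omega,
          show i - 1 + 1 = i from by omega]
        ring
      · -- upper K-start
        have hun : L (i - 1) < n := by omega
        rw [kval_up_def hut,
          sol_cc_hi (v := L (i - 1) + 1) (by omega) (by omega), mul_one,
          sol_aa_up (by omega) (by omega),
          sol_xaPath_up G (by omega) (by omega),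
          show (uppS t n ℓ L lam c A (L (i - 1) - t)).2
              = (uppS t n ℓ L lam c A (L (i - 1) - t - 1)).2
                * (uppS t n ℓ L lam c A (L (i - 1) - t - 1)).1 from by
            conv_lhs => rw [show L (i - 1) - t = (L (i - 1) - t - 1) + 1 from by omega]
            rw [uppS_snd],
          uppS_u_K (by omega) hun hKV, hMu,
          show i - 1 + 1 = i from by omega]
        ring
    · -- interior (non-K) equation at u = L (i-1) + j - 1
      have hIu : Iu ℓ L (L (i - 1) + j - 1) = i := by
        refine Good.Iu_eq h1 hi (by omega) ?_
        intro i' hi'1 hi'2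
        have hj2'' : 2 ≤ j := by
          by_contra hc
          exact hKc ⟨by omega, by omega⟩
        have hm' := G.mono i' (i - 1) (by omega) (by omega)
        omega
      have hnK : ¬ (L (Iu ℓ L (L (i - 1) + j - 1)) = L (i - 1) + j - 1) := by
        rw [hIu]; omega
      by_cases hut : L (i - 1) + j - 1 ≤ t
      · -- lower interior
        have hW : Zf n ℓ L (sol t n ℓ L lam c A) i (j - 1)
            = sol t n ℓ L lam c A (cc n ℓ (L (i - 1) + j - 1)) := by
          rcases Nat.lt_or_ge j 2 with hj2' | hj2'
          · have hj1'' : j = 1 := by omega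
            have hi1 : i = 1 := by
              by_contra hc
              exact hKc ⟨hj1'', by omega⟩
            subst hi1; subst hj1''
            rw [show (1:ℕ) - 1 = 0 from rfl, Zf_zero, show (1:ℕ) - 1 = 0 from rfl,
              kArr_zero, Nat.add_sub_cancel, G.hL0,
              sol_xaPath_low (by omega) (by omega), mul_one]
          · rw [Zf_mid (by omega) (by omega),
              show L (i - 1) + (j - 1) = L (i - 1) + j - 1 from by omega,
              sol_aa (by omega), if_pos (by omega), one_mul]
        rw [hW, sol_cc_mid (v := L (i - 1) + j - 1) (by omega) (by omega) (by omega),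
          lowS_u_nK (by omega) hut hnK, hIu,
          sol_aa_lowt hut (by omega),
          sol_cc_mid (v := L (i - 1) + j) (by omega) (by omega) (by omega),
          show t + 1 - (L (i - 1) + j) = t - (L (i - 1) + j - 1) from by omega,
          show L (i - 1) + j - 1 - L (i - 1) + 1 = j from by omega]
        ring
      · -- upper interior
        have hu1 : t + 1 ≤ L (i - 1) + j - 1 := by omega
        have hu2 : L (i - 1) + j - 1 ≤ n - 1 := by omega
        have hW : Zf n ℓ L (sol t n ℓ L lam c A) i (j - 1)
            = sol t n ℓ L lam c A (aa n ℓ (L (i - 1) + j - 1 - 1))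
              * sol t n ℓ L lam c A (cc n ℓ (L (i - 1) + j - 1)) := by
          rcases Nat.lt_or_ge j 2 with hj2' | hj2'
          · exfalso
            have hj1'' : j = 1 := by omega
            have hi1 : i = 1 := by
              by_contra hc
              exact hKc ⟨hj1'', by omega⟩
            subst hi1
            rw [G.hL0] at hu1
            omega
          · rw [Zf_mid (by omega) (by omega),
              show L (i - 1) + (j - 1) = L (i - 1) + j - 1 from by omega]
        rw [hW, sol_cc_hi (v := L (i - 1) + j) (by omega) (by omega), mul_one,
          sol_aa_up (by omega) (by omega), uppS_u_nK hu1 hnK, hIu,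
          sol_aa_up (v := L (i - 1) + j - 1 - 1) (by omega) (by omega),
          sol_cc_up (by omega) (by omega),
          show L (i - 1) + j - 1 - 1 - t = L (i - 1) + j - 1 - t - 1 from by omega,
          show L (i - 1) + j - 1 - L (i - 1) + 1 = j from by omega]
        ring
  · -- TOP cases: j = d + 1, position u = L i
    have hjt : j = L i - L (i - 1) + 1 := by omega
    subst hjt
    rw [Zf_top (by omega) (by omega)]
    have hIuLe : Iu ℓ L (L i) ≤ i := Nat.find_min' _ (Or.inl ⟨h1, le_rfl⟩)
    have hKV : L (Iu ℓ L (L i)) = L i := by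
      have h2 := G.le_L_Iu (u := L i) hLile
      have h3 := G.mono _ _ hIuLe hi
      omega
    have hiMu : i ≤ Mu ℓ L (L i) := G.le_Mu hi le_rfl
    rw [sol_k_any G h1 hi]
    by_cases hut : L i ≤ t
    · rw [sol_xcPath_low G (by omega) (by omega), kval_low_def hut]
      by_cases hIi : Iu ℓ L (L i) = i
      · -- top-of-chain equation
        have hW : Zf n ℓ L (sol t n ℓ L lam c A) i (L i - L (i - 1) + 1 - 1)
            = sol t n ℓ L lam c A (cc n ℓ (L i)) := by
          rcases Nat.eq_zero_or_pos (L i - L (i - 1)) with hd0 | hd0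
          · have hi1 : i = 1 := by
              by_contra hc
              have h7 : Iu ℓ L (L i) ≤ i - 1 :=
                Nat.find_min' _ (Or.inl ⟨by omega, by omega⟩)
              omega
            subst hi1
            have h8 : L 1 = 1 := by
              have h9 := G.hL0
              rw [show (1:ℕ) - 1 = 0 from rfl] at hd0 hmono
              omega
            rw [show L 1 - L (1 - 1) + 1 - 1 = 0 from by omega, Zf_zero, kArr_zero,
              show L (1 - 1) = L 0 from rfl, G.hL0,
              sol_xaPath_low (by omega) (by omega), mul_one, h8]
          · rw [show L i - L (i - 1) + 1 - 1 = L i - L (i - 1) from by omega,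
              Zf_mid (by omega) (by omega),
              show L (i - 1) + (L i - L (i - 1)) = L i from by omega,
              sol_aa (by omega), if_pos (by omega), one_mul]
        rw [hW, sol_cc_mid (v := L i) (by omega) (by omega) (by omega),
          lowS_u_K (by omega) hut hKV, hIi,
          show t + 1 - L i = (t - L i) + 1 from by omega, lowS_snd]
        ring
      · -- descending chain equation (d = 0, i ≥ 2)
        have hIp := Iu_pos (ℓ := ℓ) (L := L) (L i)
        have hIlt : Iu ℓ L (L i) < i := by omega
        have hLim : L (i - 1) = L i := by
          have h5 := G.mono (Iu ℓ L (L i)) (i - 1) (by omega) (by omega)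
          rw [hKV] at h5
          omega
        rw [show L i - L (i - 1) + 1 - 1 = 0 from by omega, Zf_zero,
          sol_k (by omega) (by omega), hLim,
          sol_xaPath_low (u := L i) hut (by omega), mul_one,
          show L i - L i + 1 = 1 from by omega]
        rw [kval_low_def (h := i - 1) (by omega), hLim,
          show Mu ℓ L (L i) - (i - 1) = (Mu ℓ L (L i) - i) + 1 from by omega, kdn_succ,
          show Mu ℓ L (L i) - (Mu ℓ L (L i) - i) = i from by omega,
          show t + 1 - L i = (t - L i) + 1 from by omega, lowS_snd]
        ring
    · -- upper
      rw [sol_xcPath_hi (by omega), mul_one, kval_up_def hut]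
      by_cases hIi : Iu ℓ L (L i) = i
      · -- K-first equation (d ≥ 1)
        have hd1 : 1 ≤ L i - L (i - 1) := by
          rcases Nat.lt_or_ge 1 i with hc | hc
          · have h9 := L_lt_of_lt_Iu (ℓ := ℓ) (L := L) (i := i - 1) (u := L i) (by omega) (by omega)
            omega
          · have hi1 : i = 1 := by omega
            subst hi1
            rw [show (1:ℕ) - 1 = 0 from rfl, G.hL0]
            omega
        have hW : Zf n ℓ L (sol t n ℓ L lam c A) i (L i - L (i - 1) + 1 - 1)
            = sol t n ℓ L lam c A (aa n ℓ (L i - 1))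
              * sol t n ℓ L lam c A (cc n ℓ (L i)) := by
          rw [show L i - L (i - 1) + 1 - 1 = L i - L (i - 1) from by omega,
            Zf_mid (by omega) (by omega),
            show L (i - 1) + (L i - L (i - 1)) = L i from by omega]
        rw [hW, hIi, show i - i = 0 from by omega, kup_zero,
          sol_aa_up (v := L i - 1) (by omega) (by omega),
          sol_cc_up (by omega) (by omega),
          show L i - 1 - t = L i - t - 1 from by omega]
        ring
      · -- ascending chain equation (d = 0, i ≥ 2)
        have hIp := Iu_pos (ℓ := ℓ) (L := L) (L i)
        have hIlt : Iu ℓ L (L i) < i := by omega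
        have hLim : L (i - 1) = L i := by
          have h5 := G.mono (Iu ℓ L (L i)) (i - 1) (by omega) (by omega)
          rw [hKV] at h5
          omega
        rw [show L i - L (i - 1) + 1 - 1 = 0 from by omega, Zf_zero,
          sol_k (by omega) (by omega), hLim,
          sol_xaPath_up G (by omega) (by omega),
          show L i - L i + 1 = 1 from by omega]
        rw [kval_up_def (h := i - 1) (by omega), hLim,
          show i - Iu ℓ L (L i) = ((i - 1) - Iu ℓ L (L i)) + 1 from by omega, kup_succ,
          show Iu ℓ L (L i) + (i - 1 - Iu ℓ L (L i)) + 1 = i from by omega,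
          show (uppS t n ℓ L lam c A (L i - t)).2
              = (uppS t n ℓ L lam c A (L i - t - 1)).2
                * (uppS t n ℓ L lam c A (L i - t - 1)).1 from by
            conv_lhs => rw [show L i - t = (L i - t - 1) + 1 from by omega]
            rw [uppS_snd]]
        ring

lemma nx_xaPath_low (hal : ∀ v, v + 1 ≤ t → x (aa n ℓ v) = 1) {u : ℕ} (hu : u ≤ t) :
    xaPath n ℓ x u = 1 :=
  Finset.prod_eq_one fun v hv => hal v (by rw [Finset.mem_range] at hv; omega)

lemma nx_xcPath_hi (hc0 : x (cc n ℓ 0) = 1)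
    (hch : ∀ v, t + 2 ≤ v → v ≤ n → x (cc n ℓ v) = 1) {u : ℕ} (h1 : t + 1 ≤ u) :
    xcPath n ℓ x u = 1 := by
  unfold xcPath
  rw [hc0, one_mul]
  exact Finset.prod_eq_one fun v hv => by
    rw [Finset.mem_Icc] at hv; exact hch v (by omega) (by omega)

lemma chain_low (G : Good n ℓ t L) (hx : Incs n ℓ L lam x)
    (hal : ∀ v, v + 1 ≤ t → x (aa n ℓ v) = 1)
    {u : ℕ} (hu1 : 1 ≤ u) (hu2 : u ≤ t) (hKV : L (Iu ℓ L u) = u) :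
    ∀ s, s ≤ Mu ℓ L u - Iu ℓ L u →
      x (kArr n ℓ (Mu ℓ L u - s))
        = kdn lam (Mu ℓ L u) (xcPath n ℓ x u)
            (x (aa n ℓ u) * x (cc n ℓ (u + 1)) - lam (Mu ℓ L u + 1) 1) s := by
  have hn := G.htn
  have hIp := Iu_pos (ℓ := ℓ) (L := L) u
  have hIle : Iu ℓ L u ≤ ℓ + 1 := G.Iu_le (by omega)
  have hIM : Iu ℓ L u ≤ Mu ℓ L u := G.le_Mu hIle (le_of_eq hKV)
  have hMl : Mu ℓ L u ≤ ℓ := G.Mu_le_l (by omega)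
  have hLM' : L (Mu ℓ L u + 1 - 1) = u := by
    rw [Nat.add_sub_cancel]
    exact G.L_eq_of_KV hKV hIM (by omega) le_rfl (by omega)
  have hLM1 : u + 1 ≤ L (Mu ℓ L u + 1) := Good.L_Mu_succ (ℓ := ℓ) (L := L) (by omega)
  intro s
  induction s with
  | zero =>
    intro _
    have e := hx (Mu ℓ L u + 1) (by omega) (by omega) 1 le_rfl (by omega)
    rw [Zf_mid le_rfl (by omega), show (1:ℕ) - 1 = 0 from rfl, Zf_zero, hLM',
      Nat.add_sub_cancel, Nat.add_sub_cancel, nx_xaPath_low hal hu2, mul_one] at e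
    rw [Nat.sub_zero, kdn_zero]
    linear_combination -e
  | succ s ih =>
    intro hs
    have hL1 : L (Mu ℓ L u - s) = u :=
      G.L_eq_of_KV hKV (by omega) (by omega) (by omega) (by omega)
    have hL2 : L (Mu ℓ L u - s - 1) = u :=
      G.L_eq_of_KV hKV (by omega) (by omega) (by omega) (by omega)
    have e := hx (Mu ℓ L u - s) (by omega) (by omega) 1 le_rfl (by omega)
    rw [Zf_top (by omega) one_ne_zero, show (1:ℕ) - 1 = 0 from rfl, Zf_zero, hL1, hL2,
      nx_xaPath_low hal hu2, mul_one] at e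
    rw [show Mu ℓ L u - (s + 1) = Mu ℓ L u - s - 1 from by omega, kdn_succ,
      ← ih (by omega)]
    linear_combination -e

lemma chain_up (G : Good n ℓ t L) (hx : Incs n ℓ L lam x)
    (hc0 : x (cc n ℓ 0) = 1)
    (hch : ∀ v, t + 2 ≤ v → v ≤ n → x (cc n ℓ v) = 1)
    {u : ℕ} (hu1 : t + 1 ≤ u) (hu2 : u ≤ n) (hKV : L (Iu ℓ L u) = u) :
    ∀ s, s ≤ Mu ℓ L u - Iu ℓ L u →
      x (kArr n ℓ (Iu ℓ L u + s))
        = kup lam (Iu ℓ L u) (xaPath n ℓ x u)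
            (x (aa n ℓ (u - 1)) * x (cc n ℓ u)
              + lam (Iu ℓ L u) (u - L (Iu ℓ L u - 1) + 1)) s := by
  have hn := G.htn
  have ht1 := G.ht1
  have hIp := Iu_pos (ℓ := ℓ) (L := L) u
  have hIle : Iu ℓ L u ≤ ℓ + 1 := G.Iu_le (by omega)
  have hIM : Iu ℓ L u ≤ Mu ℓ L u := G.le_Mu hIle (le_of_eq hKV)
  have hMl : Mu ℓ L u ≤ ℓ + 1 := Good.Mu_ub (ℓ := ℓ) (L := L) (u := u)
  have hLI1 : L (Iu ℓ L u - 1) < u := by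
    rcases Nat.lt_or_ge 1 (Iu ℓ L u) with hc | hc
    · exact L_lt_of_lt_Iu (ℓ := ℓ) (L := L) (by omega) (by omega)
    · have h0 : Iu ℓ L u - 1 = 0 := by omega
      rw [h0, G.hL0]; omega
  intro s
  induction s with
  | zero =>
    intro _
    have e := hx (Iu ℓ L u) (by omega) (by omega) (u - L (Iu ℓ L u - 1) + 1)
      (by omega) (by omega)
    rw [show u - L (Iu ℓ L u - 1) + 1 - 1 = u - L (Iu ℓ L u - 1) from by omega,
      Zf_top (by omega) (by omega),
      Zf_mid (by omega) (by omega),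
      show L (Iu ℓ L u - 1) + (u - L (Iu ℓ L u - 1)) = u from by omega,
      hKV, nx_xcPath_hi hc0 hch hu1, mul_one] at e
    rw [Nat.add_zero, kup_zero]
    linear_combination e
  | succ s ih =>
    intro hs
    have hL1 : L (Iu ℓ L u + s) = u :=
      G.L_eq_of_KV hKV (by omega) (by omega) (by omega) (by omega)
    have hL2 : L (Iu ℓ L u + s + 1) = u :=
      G.L_eq_of_KV hKV (by omega) (by omega) (by omega) (by omega)
    have hL2' : L (Iu ℓ L u + s + 1 - 1) = u := by rwa [Nat.add_sub_cancel]
    have e := hx (Iu ℓ L u + s + 1) (by omega) (by omega) 1 le_rfl (by omega)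
    rw [Zf_top (by omega) one_ne_zero, show (1:ℕ) - 1 = 0 from rfl, Zf_zero, hL2, hL2',
      nx_xcPath_hi hc0 hch hu1, mul_one, Nat.add_sub_cancel] at e
    rw [show Iu ℓ L u + (s + 1) = Iu ℓ L u + s + 1 from by omega, kup_succ, ← ih (by omega)]
    linear_combination e

lemma uniq_low (G : Good n ℓ t L) (hx : Incs n ℓ L lam x)
    (hc0 : x (cc n ℓ 0) = 1)
    (hch : ∀ v, t + 2 ≤ v → v ≤ n → x (cc n ℓ v) = 1)
    (hal : ∀ v, v + 1 ≤ t → x (aa n ℓ v) = 1)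
    (hcc : x (cc n ℓ (t + 1)) = c) (haa : x (aa n ℓ t) = A) :
    ∀ m, m ≤ t → x (cc n ℓ (t + 1 - m)) = (lowS t ℓ L lam c A m).1
      ∧ xcPath n ℓ x (t + 1 - m) = (lowS t ℓ L lam c A m).2 := by
  have hn := G.htn
  intro m
  induction m with
  | zero => intro _; rw [Nat.sub_zero]; exact ⟨hcc, nx_xcPath_hi hc0 hch le_rfl⟩
  | succ m ih =>
    intro hm
    obtain ⟨ih1, ih2⟩ := ih (by omega)
    have hpath : xcPath n ℓ x (t + 1 - (m + 1)) = (lowS t ℓ L lam c A (m + 1)).2 := by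
      rw [show t + 1 - (m + 1) = t - m from by omega,
        xcPath_split (by omega : t - m < n),
        show t - m + 1 = t + 1 - m from by omega, ih1, ih2, lowS_snd]
    refine ⟨?_, hpath⟩
    rw [show t + 1 - (m + 1) = t - m from by omega]
    have hP : xcPath n ℓ x (t - m)
        = (lowS t ℓ L lam c A m).1 * (lowS t ℓ L lam c A m).2 := by
      rw [← lowS_snd, show t - m = t + 1 - (m + 1) from by omega]
      exact hpath
    have haau : x (aa n ℓ (t - m)) = (if m = 0 then A else 1) := by
      by_cases h0 : m = 0
      · rw [if_pos h0, h0, Nat.sub_zero]; exact haa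
      · rw [if_neg h0]; exact hal _ (by omega)
    have hIp := Iu_pos (ℓ := ℓ) (L := L) (t - m)
    have hIle : Iu ℓ L (t - m) ≤ ℓ + 1 := G.Iu_le (by omega)
    have hLIu : t - m ≤ L (Iu ℓ L (t - m)) := G.le_L_Iu (by omega)
    have hccs : x (cc n ℓ (t - m + 1)) = (lowS t ℓ L lam c A m).1 := by
      rw [show t - m + 1 = t + 1 - m from by omega]; exact ih1
    by_cases hKV : L (Iu ℓ L (t - m)) = t - m
    · -- K vertex
      have hIM : Iu ℓ L (t - m) ≤ Mu ℓ L (t - m) := G.le_Mu hIle (le_of_eq hKV)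
      have hMl : Mu ℓ L (t - m) ≤ ℓ := G.Mu_le_l (by omega)
      have hkI := chain_low G hx hal (by omega : 1 ≤ t - m) (by omega) hKV
          (Mu ℓ L (t - m) - Iu ℓ L (t - m)) le_rfl
      rw [show Mu ℓ L (t - m) - (Mu ℓ L (t - m) - Iu ℓ L (t - m)) = Iu ℓ L (t - m)
          from by omega] at hkI
      have hxc : x (cc n ℓ (t - m))
          = x (kArr n ℓ (Iu ℓ L (t - m))) * xcPath n ℓ x (t - m)
            - lam (Iu ℓ L (t - m)) (t - m - L (Iu ℓ L (t - m) - 1) + 1) := by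
        rcases Nat.lt_or_ge (L (Iu ℓ L (t - m) - 1)) (t - m) with hlt | hge
        · have e := hx (Iu ℓ L (t - m)) (by omega) hIle
            (t - m - L (Iu ℓ L (t - m) - 1) + 1) (by omega) (by omega)
          rw [show t - m - L (Iu ℓ L (t - m) - 1) + 1 - 1
              = t - m - L (Iu ℓ L (t - m) - 1) from by omega,
            Zf_top (by omega) (by omega),
            Zf_mid (by omega) (by omega),
            show L (Iu ℓ L (t - m) - 1) + (t - m - L (Iu ℓ L (t - m) - 1)) = t - m
              from by omega,
            hKV, hal (t - m - 1) (by omega), one_mul] at e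
          linear_combination -e
        · have hI1 : Iu ℓ L (t - m) = 1 := by
            by_contra hc
            have := L_lt_of_lt_Iu (ℓ := ℓ) (L := L) (u := t - m)
              (i := Iu ℓ L (t - m) - 1) (by omega) (by omega)
            omega
          rw [hI1] at hKV hge hLIu
          have h00 : L (1 - 1) = 1 := G.hL0
          have hu1 : t - m = 1 := by omega
          have e := hx 1 le_rfl (by omega) 1 le_rfl (by omega)
          rw [Zf_top (by omega) one_ne_zero, show (1:ℕ) - 1 = 0 from rfl, Zf_zero,
            kArr_zero, h00, nx_xaPath_low hal (by omega), mul_one, hKV, hu1] at e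
          rw [hI1, hu1, h00, show (1:ℕ) - 1 + 1 = 1 from rfl]
          linear_combination -e
      rw [hxc, hkI, hP, haau, hccs, lowS_fst_K hKV]
    · -- non-K vertex
      have hxc : x (cc n ℓ (t - m))
          = x (aa n ℓ (t - m)) * x (cc n ℓ (t - m + 1))
            - lam (Iu ℓ L (t - m)) (t - m - L (Iu ℓ L (t - m) - 1) + 1) := by
        rcases Nat.lt_or_ge (L (Iu ℓ L (t - m) - 1)) (t - m) with hlt | hge
        · have e := hx (Iu ℓ L (t - m)) (by omega) hIle
            (t - m - L (Iu ℓ L (t - m) - 1) + 1) (by omega) (by omega)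
          rw [show t - m - L (Iu ℓ L (t - m) - 1) + 1 - 1
              = t - m - L (Iu ℓ L (t - m) - 1) from by omega,
            Zf_mid (by omega) (by omega),
            Zf_mid (by omega) (by omega),
            show L (Iu ℓ L (t - m) - 1) + (t - m - L (Iu ℓ L (t - m) - 1) + 1)
              = t - m + 1 from by omega,
            Nat.add_sub_cancel,
            show L (Iu ℓ L (t - m) - 1) + (t - m - L (Iu ℓ L (t - m) - 1)) = t - m
              from by omega,
            hal (t - m - 1) (by omega), one_mul] at e
          linear_combination -e
        · have hI1 : Iu ℓ L (t - m) = 1 := by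
            by_contra hc
            have := L_lt_of_lt_Iu (ℓ := ℓ) (L := L) (u := t - m)
              (i := Iu ℓ L (t - m) - 1) (by omega) (by omega)
            omega
          rw [hI1] at hKV hge hLIu
          have h00 : L (1 - 1) = 1 := G.hL0
          have hu1 : t - m = 1 := by omega
          have e := hx 1 le_rfl (by omega) 1 le_rfl (by omega)
          rw [Zf_mid le_rfl (by omega), show (1:ℕ) - 1 = 0 from rfl,
            Zf_zero, kArr_zero, h00, nx_xaPath_low hal (by omega), mul_one,
            Nat.add_sub_cancel] at e
          rw [hI1, hu1, h00, show (1:ℕ) - 1 + 1 = 1 from rfl]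
          linear_combination -e
      rw [hxc, haau, hccs, lowS_fst_nK hKV]

lemma uniq_up (G : Good n ℓ t L) (hx : Incs n ℓ L lam x)
    (hc0 : x (cc n ℓ 0) = 1)
    (hch : ∀ v, t + 2 ≤ v → v ≤ n → x (cc n ℓ v) = 1)
    (hal : ∀ v, v + 1 ≤ t → x (aa n ℓ v) = 1)
    (hcc : x (cc n ℓ (t + 1)) = c) (haa : x (aa n ℓ t) = A) :
    ∀ m, t + m ≤ n → x (aa n ℓ (t + m)) = (uppS t n ℓ L lam c A m).1
      ∧ xaPath n ℓ x (t + m) = (uppS t n ℓ L lam c A m).2 := by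
  have hn := G.htn
  have ht1 := G.ht1
  intro m
  induction m with
  | zero => intro _; rw [Nat.add_zero]; exact ⟨haa, nx_xaPath_low hal le_rfl⟩
  | succ m ih =>
    intro hm
    obtain ⟨ih1, ih2⟩ := ih (by omega)
    have hQ : xaPath n ℓ x (t + m + 1) = (uppS t n ℓ L lam c A m).2
        * (uppS t n ℓ L lam c A m).1 := by
      rw [xaPath_succ, ih2, ih1]
    have hpath : xaPath n ℓ x (t + (m + 1)) = (uppS t n ℓ L lam c A (m + 1)).2 := by
      rw [show t + (m + 1) = t + m + 1 from by omega, hQ, uppS_snd]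
    refine ⟨?_, hpath⟩
    rw [show t + (m + 1) = t + m + 1 from by omega]
    have hccu : x (cc n ℓ (t + m + 1)) = (if m = 0 then c else 1) := by
      by_cases h0 : m = 0
      · rw [if_pos h0, h0]; simpa using hcc
      · rw [if_neg h0]; exact hch _ (by omega) (by omega)
    have hIp := Iu_pos (ℓ := ℓ) (L := L) (t + m + 1)
    have hIle : Iu ℓ L (t + m + 1) ≤ ℓ + 1 := G.Iu_le (by omega)
    have hLIu : t + m + 1 ≤ L (Iu ℓ L (t + m + 1)) := G.le_L_Iu (by omega)
    have hLIun : L (Iu ℓ L (t + m + 1)) ≤ n := G.Lle _ hIle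
    by_cases hKV : L (Iu ℓ L (t + m + 1)) = t + m + 1
    · have hIM : Iu ℓ L (t + m + 1) ≤ Mu ℓ L (t + m + 1) := G.le_Mu hIle (le_of_eq hKV)
      by_cases hn' : t + m + 1 = n
      · have hMun : Mu ℓ L (t + m + 1) = ℓ + 1 := by rw [hn']; exact G.Mu_n
        have hk := chain_up G hx hc0 hch (u := t + m + 1) (by omega) (by omega) hKV
          (Mu ℓ L (t + m + 1) - Iu ℓ L (t + m + 1)) le_rfl
        rw [show Iu ℓ L (t + m + 1) + (Mu ℓ L (t + m + 1) - Iu ℓ L (t + m + 1))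
            = Mu ℓ L (t + m + 1) from by omega, hMun, kArr_hi le_rfl,
          Nat.add_sub_cancel, ih1, hccu, hQ,
          mul_comm ((uppS t n ℓ L lam c A m).1) (if m = 0 then c else (1:ℂ))] at hk
        rw [show (t + m + 1 : ℕ) = n from hn', hk, uppS_fst_K_n hKV hn', hMun]
      · have hMl : Mu ℓ L (t + m + 1) ≤ ℓ := G.Mu_le_l (by omega)
        have hLM' : L (Mu ℓ L (t + m + 1) + 1 - 1) = t + m + 1 := by
          rw [Nat.add_sub_cancel]
          exact G.L_eq_of_KV hKV hIM (by omega) le_rfl (by omega)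
        have hLM1 : t + m + 1 + 1 ≤ L (Mu ℓ L (t + m + 1) + 1) :=
          Good.L_Mu_succ (ℓ := ℓ) (L := L) (by omega)
        have hk := chain_up G hx hc0 hch (u := t + m + 1) (by omega) (by omega) hKV
          (Mu ℓ L (t + m + 1) - Iu ℓ L (t + m + 1)) le_rfl
        rw [show Iu ℓ L (t + m + 1) + (Mu ℓ L (t + m + 1) - Iu ℓ L (t + m + 1))
            = Mu ℓ L (t + m + 1) from by omega, Nat.add_sub_cancel, ih1, hccu, hQ,
          mul_comm ((uppS t n ℓ L lam c A m).1) (if m = 0 then c else (1:ℂ))] at hk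
        have e := hx (Mu ℓ L (t + m + 1) + 1) (by omega) (by omega) 1 le_rfl (by omega)
        rw [Zf_mid le_rfl (by omega), show (1:ℕ) - 1 = 0 from rfl, Zf_zero, hLM',
          Nat.add_sub_cancel, Nat.add_sub_cancel,
          hch (t + m + 1 + 1) (by omega) (by omega), mul_one,
          hk, hQ] at e
        rw [uppS_fst_K hKV hn']
        linear_combination e
    · -- non-K vertex
      have hLIlt : L (Iu ℓ L (t + m + 1) - 1) < t + m + 1 := by
        rcases Nat.lt_or_ge 1 (Iu ℓ L (t + m + 1)) with hcs | hcs
        · exact L_lt_of_lt_Iu (ℓ := ℓ) (L := L) (by omega) (by omega)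
        · have h0 : Iu ℓ L (t + m + 1) - 1 = 0 := by omega
          rw [h0, G.hL0]; omega
      have e := hx (Iu ℓ L (t + m + 1)) (by omega) hIle
        (t + m + 1 - L (Iu ℓ L (t + m + 1) - 1) + 1) (by omega) (by omega)
      rw [show t + m + 1 - L (Iu ℓ L (t + m + 1) - 1) + 1 - 1
          = t + m + 1 - L (Iu ℓ L (t + m + 1) - 1) from by omega,
        Zf_mid (by omega) (by omega), Zf_mid (by omega) (by omega),
        show L (Iu ℓ L (t + m + 1) - 1) + (t + m + 1 - L (Iu ℓ L (t + m + 1) - 1) + 1)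
          = t + m + 2 from by omega,
        show t + m + 2 - 1 = t + m + 1 from rfl,
        show L (Iu ℓ L (t + m + 1) - 1) + (t + m + 1 - L (Iu ℓ L (t + m + 1) - 1))
          = t + m + 1 from by omega,
        Nat.add_sub_cancel,
        hch (t + m + 2) (by omega) (by omega), mul_one] at e
      rw [uppS_fst_nK hKV, ← ih1, ← hccu]
      linear_combination e

lemma uniq_k (G : Good n ℓ t L) (hx : Incs n ℓ L lam x)
    (hc0 : x (cc n ℓ 0) = 1)
    (hch : ∀ v, t + 2 ≤ v → v ≤ n → x (cc n ℓ v) = 1)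
    (hal : ∀ v, v + 1 ≤ t → x (aa n ℓ v) = 1)
    (hcc : x (cc n ℓ (t + 1)) = c) (haa : x (aa n ℓ t) = A) :
    ∀ h, 1 ≤ h → h ≤ ℓ + 1 → x (kArr n ℓ h) = kval t n ℓ L lam c A h := by
  intro h h1 h2
  have hn := G.htn
  have ht1 := G.ht1
  have hr1 : 1 ≤ L h := G.Lge h h2
  have hr2 : L h ≤ n := G.Lle h h2
  have hIle : Iu ℓ L (L h) ≤ h := Nat.find_min' _ (Or.inl ⟨h1, le_rfl⟩)
  have hIp := Iu_pos (ℓ := ℓ) (L := L) (L h)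
  have hKV : L (Iu ℓ L (L h)) = L h := by
    have h3 := G.le_L_Iu (u := L h) (by omega)
    have h4 := G.mono _ _ hIle (by omega)
    omega
  have hMu : h ≤ Mu ℓ L (L h) := G.le_Mu (by omega) le_rfl
  by_cases hut : L h ≤ t
  · have hk := chain_low G hx hal (by omega) hut hKV (Mu ℓ L (L h) - h) (by omega)
    rw [show Mu ℓ L (L h) - (Mu ℓ L (L h) - h) = h from by omega] at hk
    obtain ⟨j1, j2⟩ := uniq_low G hx hc0 hch hal hcc haa (t - L h) (by omega)
    rw [show t + 1 - (t - L h) = L h + 1 from by omega] at j1 j2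
    have hsplit : xcPath n ℓ x (L h) = x (cc n ℓ (L h + 1)) * xcPath n ℓ x (L h + 1) :=
      xcPath_split (by omega)
    have haah : x (aa n ℓ (L h)) = (if L h = t then A else 1) := by
      by_cases h0 : L h = t
      · rw [if_pos h0, h0]; exact haa
      · rw [if_neg h0]; exact hal _ (by omega)
    rw [hk, hsplit, j1, j2, haah, kval_low_def hut]
  · have hk := chain_up G hx hc0 hch (by omega) (by omega) hKV (h - Iu ℓ L (L h)) (by omega)
    rw [show Iu ℓ L (L h) + (h - Iu ℓ L (L h)) = h from by omega] at hk
    obtain ⟨j1, j2⟩ := uniq_up G hx hc0 hch hal hcc haa (L h - t - 1) (by omega)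
    rw [show t + (L h - t - 1) = L h - 1 from by omega] at j1 j2
    have hsplit : xaPath n ℓ x (L h) = xaPath n ℓ x (L h - 1) * x (aa n ℓ (L h - 1)) := by
      have h5 := xaPath_succ (x := x) (n := n) (ℓ := ℓ) (L h - 1)
      rw [show L h - 1 + 1 = L h from by omega] at h5
      exact h5
    have hcch : x (cc n ℓ (L h)) = (if L h = t + 1 then c else 1) := by
      by_cases h0 : L h = t + 1
      · rw [if_pos h0, h0]; exact hcc
      · rw [if_neg h0]; exact hch _ (by omega) (by omega)
    rw [hk, hsplit, j1, j2, hcch,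
      mul_comm ((uppS t n ℓ L lam c A (L h - t - 1)).1) (if L h = t + 1 then c else (1:ℂ)),
      kval_up_def hut]

lemma uniq_all (G : Good n ℓ t L) (hx : Incs n ℓ L lam x)
    (hc0 : x (cc n ℓ 0) = 1)
    (hch : ∀ v, t + 2 ≤ v → v ≤ n → x (cc n ℓ v) = 1)
    (hal : ∀ v, v + 1 ≤ t → x (aa n ℓ v) = 1)
    (hcc : x (cc n ℓ (t + 1)) = c) (haa : x (aa n ℓ t) = A) :
    x = sol t n ℓ L lam c A := by
  have hn := G.htn
  funext e
  rcases e with v | v | h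
  · have he : (Sum.inl v : Arrow n ℓ) = cc n ℓ v.val := by
      rw [cc, Fin.ofNat_val_eq_self]
    have hvn : v.val ≤ n := by have := v.isLt; omega
    rw [he]
    rcases Nat.eq_zero_or_pos v.val with h0 | h0
    · rw [h0, hc0, sol_cc0]
    · rcases Nat.lt_or_ge v.val (t + 2) with hlt | hge
      · obtain ⟨j1, _⟩ := uniq_low G hx hc0 hch hal hcc haa (t + 1 - v.val) (by omega)
        rw [show t + 1 - (t + 1 - v.val) = v.val from by omega] at j1
        rw [j1, sol_cc_mid (by omega) (by omega) (by omega)]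
      · rw [hch v.val hge hvn, sol_cc_hi hge hvn]
  · have he : (Sum.inr (Sum.inl v) : Arrow n ℓ) = aa n ℓ v.val := by
      rw [aa, Fin.ofNat_val_eq_self]
    have hvn : v.val ≤ n := by have := v.isLt; omega
    rw [he]
    rcases Nat.lt_or_ge v.val t with hlt | hge
    · rw [hal v.val (by omega), sol_aa hvn, if_pos hlt]
    · obtain ⟨j1, _⟩ := uniq_up G hx hc0 hch hal hcc haa (v.val - t) (by omega)
      rw [show t + (v.val - t) = v.val from by omega] at j1
      rw [j1, sol_aa_up hge hvn]
  · have hlt := h.isLt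
    have he : (Sum.inr (Sum.inr h) : Arrow n ℓ) = kArr n ℓ (h.val + 1) := by
      rw [kArr, dif_pos ⟨by omega, by omega⟩]
      exact congrArg (fun z => Sum.inr (Sum.inr z)) (by ext; simp)
    rw [he, uniq_k G hx hc0 hch hal hcc haa (h.val + 1) (by omega) (by omega),
      sol_k (by omega) (by omega)]

end ChartW
/-- for `a > 1`, `λ ∈ Δ` and `1 ≤ t ≤ n−1`, the map
`x ↦ (x(c_{t+1,t}), x(a_{t,t+1}))` is a bijection from the set of `λ`-representations with
`x(c_{0,n}) = x(c_{n,n−1}) = ⋯ = x(c_{t+2,t+1}) = 1` and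
`x(a_{0,1}) = ⋯ = x(a_{t−1,t}) = 1` onto `ℂ²` (the chart `W_t`). -/
theorem chart_Wt_bijective
    -- the group 1/r(1,a) with r > a ≥ 1 coprime
    (r a : ℕ) (ha : 1 ≤ a) (hra : a < r) (hcop : Nat.Coprime r a)
    -- Hirzebruch–Jung expansions r/a = [α_1,…,α_n], r/(r−a) = [β_1,…,β_m]
    (n m ℓ : ℕ) (αs βs : List ℕ) (hn1 : 1 ≤ n)
    (hαlen : αs.length = n) (hα2 : ∀ x ∈ αs, 2 ≤ x)
    (hαcf : hjcf (αs.map (fun x => (x : ℚ))) = (r : ℚ) / (a : ℚ))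
    (hβlen : βs.length = m) (hβ2 : ∀ x ∈ βs, 2 ≤ x)
    (hβcf : hjcf (βs.map (fun x => (x : ℚ))) = (r : ℚ) / ((r : ℚ) - (a : ℚ)))
    -- ℓ = Σ(α_i − 2), e = ℓ + 3 = m + 2
    (hl : ℓ = ∑ i ∈ Finset.range n, (αs.getD i 0 - 2))
    (hm : m = ℓ + 1)
    -- l_h = tail vertex of k_h: weakly increasing, l_0 = 1, l_{ℓ+1} = n, with
    -- α_i − 2 of the extra arrows having tail i; Riemenschneider duality
    (L : ℕ → ℕ) (hL0 : L 0 = 1) (hLtop : L (ℓ + 1) = n)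
    (hLmono : ∀ h₁ h₂, h₁ ≤ h₂ → h₂ ≤ ℓ + 1 → L h₁ ≤ L h₂)
    (hLrange : ∀ h, 1 ≤ h → h ≤ ℓ → 1 ≤ L h ∧ L h ≤ n)
    (hmult : ∀ i, 1 ≤ i → i ≤ n →
      ((Finset.Icc 1 ℓ).filter (fun h => L h = i)).card = αs.getD (i - 1) 0 - 2)
    (hdual : ∀ t, 1 ≤ t → t ≤ m → βs.getD (t - 1) 0 = L t - L (t - 1) + 2)
    -- a > 1
    (ha1 : 1 < a)
    -- λ ∈ Δ
    (lam : ℕ → ℕ → ℂ) (hlam : InDelta ℓ (fun t => βs.getD (t - 1) 0) lam)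
    -- the chart index t, 1 ≤ t ≤ n−1
    (t : ℕ) (ht1 : 1 ≤ t) (htn : t ≤ n - 1) :
    Function.Bijective
      (fun x : {x : Arrow n ℓ → ℂ //
          IsLamRep n ℓ L (fun s => βs.getD (s - 1) 0) lam x ∧
          x (cc n ℓ 0) = 1 ∧ (∀ v, t + 2 ≤ v → v ≤ n → x (cc n ℓ v) = 1) ∧
          (∀ v, v + 1 ≤ t → x (aa n ℓ v) = 1)} =>
        ((x.val (cc n ℓ (t + 1)), x.val (aa n ℓ t)) : ℂ × ℂ)) := by
  have hn' : t + 1 ≤ n := by omega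
  have G : ChartW.Good n ℓ t L := ⟨hL0, hLtop, hLmono, hLrange, ht1, hn'⟩
  have hd : ∀ i, 1 ≤ i → i ≤ ℓ + 1 →
      (fun s => βs.getD (s - 1) 0) i = L i - L (i - 1) + 2 :=
    fun i hi1 hi2 => hdual i hi1 (by omega)
  rw [Function.bijective_iff_existsUnique]
  rintro ⟨c, A⟩
  refine ⟨⟨ChartW.sol t n ℓ L lam c A, ?_, ?_, ?_, ?_⟩, ?_, ?_⟩
  · exact (ChartW.isLamRep_iff G _ hd hlam).2 (ChartW.sol_incs G)
  · exact ChartW.sol_cc0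
  · intro v hv1 hv2; exact ChartW.sol_cc_hi hv1 hv2
  · intro v hv; rw [ChartW.sol_aa (by omega), if_pos (by omega)]
  · show (ChartW.sol t n ℓ L lam c A (cc n ℓ (t + 1)),
        ChartW.sol t n ℓ L lam c A (aa n ℓ t)) = (c, A)
    rw [ChartW.sol_cct hn', ChartW.sol_aat (by omega)]
  · rintro ⟨y, hyrep, hy0, hych, hyal⟩ hy
    have hy1 : y (cc n ℓ (t + 1)) = c := congrArg Prod.fst hy
    have hy2 : y (aa n ℓ t) = A := congrArg Prod.snd hy
    exact Subtype.ext (ChartW.uniq_all G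
      ((ChartW.isLamRep_iff G _ hd hlam).1 hyrep) hy0 hych hyal hy1 hy2)
end

section
/- Assume a > 1 and λ ∈ Δ. The map x ↦ (x(c_{0,n}), x(a_{n,0})) is a bijection from the set of λ-representations x : Q_1 → ℂ satisfying x(a_{0,1}) = x(a_{1,2}) = ⋯ = x(a_{n−1,n}) = 1 onto ℂ². (This is the chart W_n of the moduli space of the deformed reconstruction algebra A_{r,a,λ}, and it is isomorphic to affine 2-space.) -/
namespace ChartWn

def Iv (ℓ : ℕ) (L : ℕ → ℕ) (v : ℕ) : ℕ :=
  Nat.find (p := fun i => v ≤ L i ∨ i = ℓ + 1) ⟨ℓ + 1, Or.inr rfl⟩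

lemma Iv_le_Lget (ℓ : ℕ) (L : ℕ → ℕ) (v : ℕ) : v ≤ L (Iv ℓ L v) ∨ Iv ℓ L v = ℓ + 1 := by
  exact Nat.find_spec (p := fun i => v ≤ L i ∨ i = ℓ + 1) ⟨ℓ + 1, Or.inr rfl⟩

lemma Iv_eq (ℓ : ℕ) (L : ℕ → ℕ) (hm : Monotone L) {i v : ℕ}
    (hi1 : 1 ≤ i) (hi2 : i ≤ ℓ + 1) (hlow : L (i - 1) < v) (hhigh : v ≤ L i) :
    Iv ℓ L v = i := by
  unfold Iv
  rw [Nat.find_eq_iff]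
  refine ⟨Or.inl hhigh, ?_⟩
  intro j hj
  push_neg
  refine ⟨?_, by omega⟩
  have h2 : L j ≤ L (i - 1) := hm (by omega)
  omega

lemma meas1 {n ℓ i c w : ℕ} (hw1 : c + 1 ≤ w) (hw2 : w ≤ n) (hi : i ≤ ℓ) :
    (n - w) * (ℓ + 2) + (ℓ + 2) < (n - c) * (ℓ + 2) + (ℓ + 1 - i) := by
  have h1 : n - w + 1 ≤ n - c := by omega
  calc (n - w) * (ℓ + 2) + (ℓ + 2) = (n - w + 1) * (ℓ + 2) := by ring
    _ ≤ (n - c) * (ℓ + 2) := Nat.mul_le_mul_right _ h1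
    _ < (n - c) * (ℓ + 2) + (ℓ + 1 - i) := by omega

lemma meas2 {n ℓ v w : ℕ} (hw1 : v + 1 ≤ w) (hw2 : w ≤ n) :
    (n - w) * (ℓ + 2) + (ℓ + 2) < (n - v) * (ℓ + 2) + (ℓ + 2) := by
  have h1 : n - w + 1 ≤ n - v := by omega
  calc (n - w) * (ℓ + 2) + (ℓ + 2) = (n - w + 1) * (ℓ + 2) := by ring
    _ ≤ (n - v) * (ℓ + 2) := Nat.mul_le_mul_right _ h1
    _ < (n - v) * (ℓ + 2) + (ℓ + 2) := by omega

def solMeas (n ℓ : ℕ) (L : ℕ → ℕ) : Bool × ℕ → ℕ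
  | (true, i) => (n - L i) * (ℓ + 2) + (ℓ + 1 - i)
  | (false, v) => (n - v) * (ℓ + 2) + (ℓ + 2)

def sol (n ℓ : ℕ) (L : ℕ → ℕ) (lam : ℕ → ℕ → ℂ) (p q : ℂ) : Bool × ℕ → ℂ
  | (true, i) =>
      if hle : ℓ + 1 ≤ i then q
      else if h : L (i + 1) = L i then
        sol n ℓ L lam p q (true, i + 1)
          * (p * ∏ w ∈ (Finset.Icc (L (i + 1) + 1) n).attach, sol n ℓ L lam p q (false, w.1))
          - lam (i + 1) 1
      else if hlt : L i < n then sol n ℓ L lam p q (false, L i + 1) - lam (i + 1) 1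
      else 0
  | (false, v) =>
      if h0 : 1 ≤ L 0 ∧ v ≤ 1 then sol n ℓ L lam p q (true, 0)
      else if h : L (Iv ℓ L v) = v ∧ 2 ≤ v ∧ v ≤ n then
        sol n ℓ L lam p q (true, Iv ℓ L v)
          * (p * ∏ w ∈ (Finset.Icc (v + 1) n).attach, sol n ℓ L lam p q (false, w.1))
          - lam (Iv ℓ L v) (L (Iv ℓ L v) - L (Iv ℓ L v - 1) + 1)
      else if hvn : v < n then
        sol n ℓ L lam p q (false, v + 1) - lam (Iv ℓ L v) (v - L (Iv ℓ L v - 1) + 1)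
      else 0
termination_by t => solMeas n ℓ L t
decreasing_by
  · simp only [solMeas]
    rw [h]
    exact Nat.add_lt_add_left (by omega) _
  · simp only [solMeas]
    have hw := w.2
    rw [Finset.mem_Icc] at hw
    exact meas1 (show L i + 1 ≤ ↑w by omega) hw.2 (by omega)
  · simp only [solMeas]
    exact meas1 (le_refl _) hlt (by omega)
  · simp only [solMeas]
    exact add_lt_add_of_le_of_lt (Nat.mul_le_mul_right _ (by omega)) (by omega)
  · simp only [solMeas]
    rw [h.1]
    exact Nat.add_lt_add_left (by omega) _
  · simp only [solMeas]
    have hw := w.2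
    rw [Finset.mem_Icc] at hw
    exact meas2 hw.1 hw.2
  · simp only [solMeas]
    exact meas2 (le_refl _) hvn


def Cp (n ℓ : ℕ) (L : ℕ → ℕ) (lam : ℕ → ℕ → ℂ) (p q : ℂ) (v : ℕ) : ℂ :=
  p * ∏ w ∈ Finset.Icc (v + 1) n, sol n ℓ L lam p q (false, w)

section
variable {n ℓ : ℕ} {L : ℕ → ℕ} {lam : ℕ → ℕ → ℂ} {p q : ℂ}

lemma solK_top : sol n ℓ L lam p q (true, ℓ + 1) = q := by
  rw [sol.eq_1, dif_pos (le_refl _)]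

lemma sol_cc1 (h0 : 1 ≤ L 0) : sol n ℓ L lam p q (false, 1) = sol n ℓ L lam p q (true, 0) := by
  rw [sol.eq_2, dif_pos ⟨h0, le_refl 1⟩]

lemma solF3 {i : ℕ} (hi : i ≤ ℓ) (h : L (i + 1) = L i) :
    sol n ℓ L lam p q (true, i)
      = sol n ℓ L lam p q (true, i + 1) * Cp n ℓ L lam p q (L i) - lam (i + 1) 1 := by
  rw [sol.eq_1, dif_neg (by omega), dif_pos h, Cp, h,
    Finset.prod_attach (Finset.Icc (L i + 1) n) (fun w => sol n ℓ L lam p q (false, w))]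

lemma solF4 (hm : Monotone L) (hn : ∀ j, L j ≤ n) {i : ℕ} (hi : i ≤ ℓ) (h : L (i + 1) ≠ L i) :
    sol n ℓ L lam p q (true, i) = sol n ℓ L lam p q (false, L i + 1) - lam (i + 1) 1 := by
  have h1 : L i ≤ L (i + 1) := hm (by omega)
  have h2 : L (i + 1) ≤ n := hn _
  rw [sol.eq_1, dif_neg (by omega), dif_neg h, dif_pos (by omega)]

lemma solF3' (hm : Monotone L) {i : ℕ} (hi1 : 1 ≤ i) (hi2 : i ≤ ℓ + 1) (h : L i = L (i - 1)) :
    sol n ℓ L lam p q (true, i - 1)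
      = sol n ℓ L lam p q (true, i) * Cp n ℓ L lam p q (L i) - lam i 1 := by
  obtain ⟨j, rfl⟩ : ∃ j, i = j + 1 := ⟨i - 1, by omega⟩
  simp only [Nat.add_sub_cancel] at h ⊢
  rw [solF3 (by omega) h, h]

lemma solF4' (hm : Monotone L) (hn : ∀ j, L j ≤ n) {i : ℕ} (hi1 : 1 ≤ i) (hi2 : i ≤ ℓ + 1)
    (h : L i ≠ L (i - 1)) :
    sol n ℓ L lam p q (true, i - 1)
      = sol n ℓ L lam p q (false, L (i - 1) + 1) - lam i 1 := by
  obtain ⟨j, rfl⟩ : ∃ j, i = j + 1 := ⟨i - 1, by omega⟩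
  simp only [Nat.add_sub_cancel] at h ⊢
  exact solF4 hm hn (by omega) h

lemma solF2 (hm : Monotone L) (hn : ∀ j, L j ≤ n) (h0 : L 0 = 1) {i : ℕ}
    (hi1 : 1 ≤ i) (hi2 : i ≤ ℓ + 1) (hlt : L (i - 1) < L i) :
    sol n ℓ L lam p q (false, L i)
      = sol n ℓ L lam p q (true, i) * Cp n ℓ L lam p q (L i) - lam i (L i - L (i - 1) + 1) := by
  have hIv : Iv ℓ L (L i) = i := Iv_eq ℓ L hm hi1 hi2 hlt (le_refl _)
  have h1 : 1 ≤ L (i - 1) := h0 ▸ hm (Nat.zero_le _)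
  rw [sol.eq_2, dif_neg (by omega), hIv, dif_pos ⟨rfl, by omega, hn i⟩, Cp,
    Finset.prod_attach (Finset.Icc (L i + 1) n) (fun w => sol n ℓ L lam p q (false, w))]

lemma solF1 (hm : Monotone L) (hn : ∀ j, L j ≤ n) (h0 : L 0 = 1) {i v : ℕ}
    (hi1 : 1 ≤ i) (hi2 : i ≤ ℓ + 1) (hl : L (i - 1) < v) (hv : v < L i) :
    sol n ℓ L lam p q (false, v)
      = sol n ℓ L lam p q (false, v + 1) - lam i (v - L (i - 1) + 1) := by
  have hIv : Iv ℓ L v = i := Iv_eq ℓ L hm hi1 hi2 hl (by omega)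
  have h1 : 1 ≤ L (i - 1) := h0 ▸ hm (Nat.zero_le _)
  have h2 : L i ≤ n := hn i
  rw [sol.eq_2, dif_neg (by omega), hIv, dif_neg (by omega), dif_pos (by omega)]

end

section
variable {n ℓ : ℕ} {L : ℕ → ℕ} {lam : ℕ → ℕ → ℂ} {p q : ℂ}

lemma solA (hm : Monotone L) (hn : ∀ j, L j ≤ n) (h0 : L 0 = 1) {i : ℕ}
    (hi1 : 1 ≤ i) (hi2 : i ≤ ℓ + 1) :
    ∀ t v, L (i - 1) < v → v ≤ L i → L i ≤ v + t →
      sol n ℓ L lam p q (false, v)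
        = sol n ℓ L lam p q (true, i) * Cp n ℓ L lam p q (L i)
          - ∑ j ∈ Finset.range (L i + 1 - v), lam i (v - L (i - 1) + 1 + j) := by
  intro t
  induction t with
  | zero =>
    intro v h1 h2 h3
    have hv : v = L i := by omega
    subst hv
    rw [solF2 hm hn h0 hi1 hi2 h1, show L i + 1 - L i = 1 from by omega,
      Finset.sum_range_one, Nat.add_zero]
  | succ t ih =>
    intro v h1 h2 h3
    by_cases hle : L i ≤ v + t
    · exact ih v h1 h2 hle
    · have hv : v < L i := by omega
      rw [solF1 hm hn h0 hi1 hi2 h1 hv, ih (v + 1) (by omega) (by omega) (by omega),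
        show L i + 1 - (v + 1) = L i - v from by omega,
        Finset.sum_congr rfl (fun j _ => show lam i (v + 1 - L (i - 1) + 1 + j)
          = lam i (v - L (i - 1) + 1 + (j + 1)) from by congr 1; omega),
        show L i + 1 - v = (L i - v) + 1 from by omega, Finset.sum_range_succ']
      simp only [Nat.add_zero]
      ring

lemma solB (hm : Monotone L) (hn : ∀ j, L j ≤ n) (h0 : L 0 = 1) {i : ℕ}
    (hi1 : 1 ≤ i) (hi2 : i ≤ ℓ + 1)
    (hΔ : ∑ j ∈ Finset.range (L i - L (i - 1) + 2), lam i j = 0) :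
    sol n ℓ L lam p q (true, i - 1)
      = sol n ℓ L lam p q (true, i) * Cp n ℓ L lam p q (L i) + lam i 0 := by
  have hmono : L (i - 1) ≤ L i := hm (by omega)
  by_cases hd : L i = L (i - 1)
  · rw [solF3' hm hi1 hi2 hd]
    rw [show L i - L (i - 1) + 2 = 2 from by omega] at hΔ
    simp [Finset.sum_range_succ] at hΔ
    linear_combination -hΔ
  · have hlt : L (i - 1) < L i := by omega
    rw [solF4' hm hn hi1 hi2 hd,
      solA hm hn h0 hi1 hi2 (L i) (L (i - 1) + 1) (by omega) (by omega) (by omega),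
      Finset.sum_congr rfl (fun j _ => show lam i (L (i - 1) + 1 - L (i - 1) + 1 + j)
        = lam i (j + 2) from by congr 1; omega),
      show L i + 1 - (L (i - 1) + 1) = L i - L (i - 1) from by omega]
    have hexp : ∑ j ∈ Finset.range (L i - L (i - 1) + 2), lam i j
        = (∑ j ∈ Finset.range (L i - L (i - 1)), lam i (j + 2)) + lam i 1 + lam i 0 := by
      rw [Finset.sum_range_succ', Finset.sum_range_succ',
        Finset.sum_congr rfl (fun j _ => show lam i (j + 1 + 1) = lam i (j + 2) from by norm_num)]
    rw [hexp] at hΔ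
    have hs : (∑ j ∈ Finset.range (L i - L (i - 1)), lam i (j + 2)) = - lam i 1 - lam i 0 := by
      linear_combination hΔ
    rw [hs]
    ring

end
def mkx (n ℓ : ℕ) (s : Bool × ℕ → ℂ) (p q : ℂ) : Arrow n ℓ → ℂ
  | Sum.inl v => if v.val = 0 then p else s (false, v.val)
  | Sum.inr (Sum.inl v) => if v.val = n then q else 1
  | Sum.inr (Sum.inr h) => s (true, h.val + 1)

lemma fv {n v : ℕ} (h : v ≤ n) : ((Fin.ofNat (n + 1) v : Fin (n + 1)) : ℕ) = v := by
  rw [Fin.val_ofNat]; exact Nat.mod_eq_of_lt (by omega)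
section
variable {n ℓ : ℕ} {s : Bool × ℕ → ℂ} {L : ℕ → ℕ} {lam : ℕ → ℕ → ℂ} {p q : ℂ}
lemma mkx_cc0 : mkx n ℓ s p q (cc n ℓ 0) = p := by
  show (if ((Fin.ofNat (n + 1) (0:ℕ) : Fin (n + 1)) : ℕ) = 0 then p else s (false, ((Fin.ofNat (n + 1) (0:ℕ) : Fin (n + 1)) : ℕ))) = p
  rw [fv (Nat.zero_le n), if_pos rfl]
lemma mkx_cc {v : ℕ} (h1 : 1 ≤ v) (h2 : v ≤ n) :
    mkx n ℓ s p q (cc n ℓ v) = s (false, v) := by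
  show (if ((Fin.ofNat (n + 1) v : Fin (n + 1)) : ℕ) = 0 then p else s (false, ((Fin.ofNat (n + 1) v : Fin (n + 1)) : ℕ))) = s (false, v)
  rw [fv h2, if_neg (by omega)]
lemma mkx_aa {v : ℕ} (h : v < n) : mkx n ℓ s p q (aa n ℓ v) = 1 := by
  show (if ((Fin.ofNat (n + 1) v : Fin (n + 1)) : ℕ) = n then q else 1) = 1
  rw [fv (le_of_lt h), if_neg (by omega)]
lemma mkx_aan : mkx n ℓ s p q (aa n ℓ n) = q := by
  show (if ((Fin.ofNat (n + 1) n : Fin (n + 1)) : ℕ) = n then q else 1) = q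
  rw [fv (le_refl n), if_pos rfl]
lemma mkx_k {h : ℕ} (h1 : 1 ≤ h) (h2 : h ≤ ℓ) :
    mkx n ℓ s p q (kArr n ℓ h) = s (true, h) := by
  rw [kArr, dif_pos ⟨h1, h2⟩]
  show s (true, h - 1 + 1) = s (true, h)
  rw [show h - 1 + 1 = h from by omega]
lemma mkx_k0 (hn1 : 1 ≤ n) : mkx n ℓ s p q (kArr n ℓ 0) = s (false, 1) := by
  rw [kArr, dif_neg (by omega), if_pos rfl]
  exact mkx_cc (le_refl 1) hn1
lemma mkx_ktop : mkx n ℓ s p q (kArr n ℓ (ℓ + 1)) = q := by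
  rw [kArr, dif_neg (by omega), if_neg (by omega)]
  exact mkx_aan

lemma mkx_karr (h0 : 1 ≤ L 0) (hn1 : 1 ≤ n) {h : ℕ} (hh : h ≤ ℓ + 1) :
    mkx n ℓ (sol n ℓ L lam p q) p q (kArr n ℓ h) = sol n ℓ L lam p q (true, h) := by
  rcases Nat.eq_zero_or_pos h with rfl | h1
  · rw [mkx_k0 hn1, sol_cc1 h0]
  · rcases Nat.lt_or_ge h (ℓ + 1) with h2 | h2
    · exact mkx_k h1 (by omega)
    · have : h = ℓ + 1 := by omega
      subst this
      rw [mkx_ktop, solK_top]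

lemma xaPath_one {x : Arrow n ℓ → ℂ} (hx : ∀ v, v + 1 ≤ n → x (aa n ℓ v) = 1)
    {j : ℕ} (hj : j ≤ n) : xaPath n ℓ x j = 1 :=
  Finset.prod_eq_one fun v hv => hx v (by rw [Finset.mem_range] at hv; omega)

lemma xcPath_eq {x : Arrow n ℓ → ℂ} {j : ℕ} (h0 : x (cc n ℓ 0) = p)
    (h : ∀ v, j + 1 ≤ v → v ≤ n → x (cc n ℓ v) = sol n ℓ L lam p q (false, v)) :
    xcPath n ℓ x j = Cp n ℓ L lam p q j := by
  unfold xcPath Cp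
  rw [h0]
  congr 1
  refine Finset.prod_congr rfl fun v hv => ?_
  rw [Finset.mem_Icc] at hv
  exact h v hv.1 hv.2

lemma xcPath_mkx (j : ℕ) :
    xcPath n ℓ (mkx n ℓ (sol n ℓ L lam p q) p q) j = Cp n ℓ L lam p q j :=
  xcPath_eq mkx_cc0 fun v h1 h2 => mkx_cc (by omega) h2

end
section
variable {n ℓ : ℕ} {L : ℕ → ℕ} {lam : ℕ → ℕ → ℂ} {p q : ℂ}

lemma sol_isRep (hm : Monotone L) (hn : ∀ j, L j ≤ n) (h0 : L 0 = 1) (ht : L (ℓ + 1) = n)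
    (hΔ : ∀ i, 1 ≤ i → i ≤ ℓ + 1 → ∑ j ∈ Finset.range (L i - L (i - 1) + 2), lam i j = 0) :
    IsLamRep n ℓ L (fun t => L t - L (t - 1) + 2) lam (mkx n ℓ (sol n ℓ L lam p q) p q) := by
  have hn1 : 1 ≤ n := by
    have := hm (Nat.zero_le (ℓ + 1))
    omega
  intro i hi1 hi2
  have hmono : L (i - 1) ≤ L i := hm (by omega)
  have hLin : L i ≤ n := hn i
  have h1L : 1 ≤ L (i - 1) := by
    have := hm (Nat.zero_le (i - 1))
    omega
  have hka : mkx n ℓ (sol n ℓ L lam p q) p q (kArr n ℓ i) = sol n ℓ L lam p q (true, i) :=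
    mkx_karr (by omega) hn1 hi2
  have hka' : mkx n ℓ (sol n ℓ L lam p q) p q (kArr n ℓ (i - 1))
      = sol n ℓ L lam p q (true, i - 1) := mkx_karr (by omega) hn1 (by omega)
  have hxc : xcPath n ℓ (mkx n ℓ (sol n ℓ L lam p q) p q) (L i) = Cp n ℓ L lam p q (L i) :=
    xcPath_mkx _
  have hxa : xaPath n ℓ (mkx n ℓ (sol n ℓ L lam p q) p q) (L (i - 1)) = 1 :=
    xaPath_one (fun v hv => mkx_aa (by omega)) (by omega)
  have hB := solB (lam := lam) (p := p) (q := q) hm hn h0 hi1 hi2 (hΔ i hi1 hi2)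
  constructor
  · intro hd
    have hd' : L i = L (i - 1) := by omega
    constructor
    · rw [hka, hka', hxc, hxa, mul_one, solF3' hm hi1 hi2 hd']
      ring
    · rw [hka, hka', hxc, hxa, one_mul, hB]
      ring
  · intro hd
    have hlt : L (i - 1) < L i := by omega
    refine ⟨?_, ?_, ?_, ?_⟩
    · rw [hka, hxc, mkx_cc (by omega) hLin, mkx_aa (show L i - 1 < n by omega), mul_one]
      have hb : (fun t => L t - L (t - 1) + 2) i - 1 = L i - L (i - 1) + 1 := by
        show L i - L (i - 1) + 2 - 1 = L i - L (i - 1) + 1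
        omega
      rw [hb]
      linear_combination - solF2 (lam := lam) (p := p) (q := q) hm hn h0 hi1 hi2 hlt
    · intro u hu1 hu2
      rw [mkx_aa (show u < n by omega), mkx_aa (show u - 1 < n by omega),
        mkx_cc (show 1 ≤ u + 1 by omega) (show u + 1 ≤ n by omega),
        mkx_cc (show 1 ≤ u by omega) (show u ≤ n by omega), one_mul, mul_one]
      linear_combination - solF1 (lam := lam) (p := p) (q := q) hm hn h0 hi1 hi2
        (show L (i - 1) < u by omega) (show u < L i by omega)
    · rw [mkx_aa (show L (i - 1) < n by omega),
        mkx_cc (show 1 ≤ L (i - 1) + 1 by omega) (show L (i - 1) + 1 ≤ n by omega),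
        hka', hxa, one_mul, mul_one,
        solF4' hm hn hi1 hi2 (show L i ≠ L (i - 1) by omega)]
      ring
    · rw [hka, hka', hxc, hxa, one_mul, hB]
      ring
end

section
variable {n ℓ : ℕ} {L : ℕ → ℕ} {lam : ℕ → ℕ → ℂ}

lemma rep_eq (hm : Monotone L) (hn : ∀ j, L j ≤ n) (h0 : L 0 = 1) (ht : L (ℓ + 1) = n)
    {x : Arrow n ℓ → ℂ}
    (hx : IsLamRep n ℓ L (fun t => L t - L (t - 1) + 2) lam x)
    (hx1 : ∀ v, v + 1 ≤ n → x (aa n ℓ v) = 1) :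
    x = mkx n ℓ (sol n ℓ L lam (x (cc n ℓ 0)) (x (aa n ℓ n))) (x (cc n ℓ 0)) (x (aa n ℓ n)) := by
  have hn1 : 1 ≤ n := by
    have := hm (Nat.zero_le (ℓ + 1))
    omega
  set p := x (cc n ℓ 0) with hp
  set q := x (aa n ℓ n) with hq
  have key : ∀ j, j ≤ ℓ + 1 →
      (x (kArr n ℓ (ℓ + 1 - j)) = sol n ℓ L lam p q (true, ℓ + 1 - j) ∧
       ∀ v, L (ℓ + 1 - j) < v → v ≤ n → x (cc n ℓ v) = sol n ℓ L lam p q (false, v)) := by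
    intro j
    induction j with
    | zero =>
      intro _
      simp only [Nat.sub_zero]
      constructor
      · rw [show kArr n ℓ (ℓ + 1) = aa n ℓ n from by
          rw [kArr, dif_neg (by omega), if_neg (by omega)], solK_top]
      · intro v hv1 hv2
        rw [ht] at hv1
        omega
    | succ j ihj =>
      intro hj1
      have ih := ihj (by omega)
      have hect : ℓ + 1 - (j + 1) = (ℓ + 1 - j) - 1 := by omega
      rw [hect] at *
      set i := ℓ + 1 - j with hidef
      have hi1 : 1 ≤ i := by omega
      have hi2 : i ≤ ℓ + 1 := by omega
      have hstep := hx i hi1 hi2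
      have hmono : L (i - 1) ≤ L i := hm (by omega)
      have hLin : L i ≤ n := hn i
      have h1L : 1 ≤ L (i - 1) := by
        have := hm (Nat.zero_le (i - 1))
        omega
      have hxc : xcPath n ℓ x (L i) = Cp n ℓ L lam p q (L i) :=
        xcPath_eq rfl (fun v h1 h2 => ih.2 v (by omega) h2)
      have hxa : xaPath n ℓ x (L (i - 1)) = 1 := xaPath_one hx1 (by have := hn (i - 1); omega)
      by_cases hd : L i = L (i - 1)
      · have h01 := (hstep.1 (by omega)).1
        rw [hxa, mul_one, ih.1, hxc] at h01
        refine ⟨?_, fun v hv1 hv2 => ih.2 v (by omega) hv2⟩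
        rw [solF3' hm hi1 hi2 hd]
        linear_combination - h01
      · have hlt : L (i - 1) < L i := by omega
        have hrel := hstep.2 (by omega)
        have htop := hrel.1
        have hb : (fun t => L t - L (t - 1) + 2) i - 1 = L i - L (i - 1) + 1 := by
          show L i - L (i - 1) + 2 - 1 = L i - L (i - 1) + 1
          omega
        rw [hb, ih.1, hxc, hx1 (L i - 1) (by omega), mul_one] at htop
        have hcc : ∀ t v, L i ≤ v + t → L (i - 1) < v → v ≤ L i →
            x (cc n ℓ v) = sol n ℓ L lam p q (false, v) := by
          intro t
          induction t with
          | zero =>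
            intro v hv0 hv1 hv2
            have hveq : v = L i := by omega
            subst hveq
            rw [solF2 hm hn h0 hi1 hi2 hlt]
            linear_combination - htop
          | succ t iht =>
            intro v hv0 hv1 hv2
            by_cases hvt : L i ≤ v + t
            · exact iht v hvt hv1 hv2
            · have hvlt : v < L i := by omega
              have hmid := hrel.2.1 v (by omega) (by omega)
              rw [hx1 v (by omega), hx1 (v - 1) (by omega), one_mul, mul_one,
                iht (v + 1) (by omega) (by omega) (by omega)] at hmid
              rw [solF1 hm hn h0 hi1 hi2 hv1 hvlt]
              linear_combination - hmid
        have h11 := hrel.2.2.1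
        rw [hx1 (L (i - 1)) (by omega), one_mul, hxa, mul_one,
          hcc (L i) (L (i - 1) + 1) (by omega) (by omega) (by omega)] at h11
        refine ⟨?_, fun v hv1 hv2 => ?_⟩
        · rw [solF4' hm hn hi1 hi2 (by omega)]
          linear_combination - h11
        · by_cases hvL : v ≤ L i
          · exact hcc (L i) v (by omega) (by omega) hvL
          · exact ih.2 v (by omega) hv2
  have hcall : ∀ v, 1 ≤ v → v ≤ n → x (cc n ℓ v) = sol n ℓ L lam p q (false, v) := by
    intro v hv1 hv2
    rcases Nat.lt_or_ge 1 v with h | h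
    · have := (key (ℓ + 1) (le_refl _)).2
      rw [show ℓ + 1 - (ℓ + 1) = 0 from by omega, h0] at this
      exact this v (by omega) hv2
    · have hv : v = 1 := by omega
      subst hv
      have hk0 := (key (ℓ + 1) (le_refl _)).1
      rw [show ℓ + 1 - (ℓ + 1) = 0 from by omega] at hk0
      rw [kArr, dif_neg (by omega), if_pos rfl] at hk0
      rw [hk0, sol_cc1 (by omega)]
  have hkall : ∀ h, h ≤ ℓ + 1 → x (kArr n ℓ h) = sol n ℓ L lam p q (true, h) := by
    intro h hh
    have := (key (ℓ + 1 - h) (by omega)).1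
    rwa [show ℓ + 1 - (ℓ + 1 - h) = h from by omega] at this
  funext ar
  match ar with
  | Sum.inl w =>
    by_cases hw : (w : ℕ) = 0
    · have : Sum.inl (α := Fin (n+1)) (β := Fin (n+1) ⊕ Fin ℓ) w = cc n ℓ 0 := by
        rw [cc]
        congr 1
        rw [← Fin.val_inj, fv (Nat.zero_le n), hw]
      rw [this, mkx_cc0]
    · have hle : (w : ℕ) ≤ n := by omega
      have : Sum.inl (α := Fin (n+1)) (β := Fin (n+1) ⊕ Fin ℓ) w = cc n ℓ (w : ℕ) := by
        rw [cc]
        congr 1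
        rw [← Fin.val_inj, fv hle]
      rw [this, mkx_cc (by omega) hle, hcall (w : ℕ) (by omega) hle]
  | Sum.inr (Sum.inl w) =>
    have hle : (w : ℕ) ≤ n := by omega
    have heq : Sum.inr (α := Fin (n+1)) (Sum.inl (β := Fin ℓ) w) = aa n ℓ (w : ℕ) := by
      rw [aa]
      congr 2
      rw [← Fin.val_inj, fv hle]
    by_cases hw : (w : ℕ) = n
    · rw [heq, hw, mkx_aan, hq]
    · rw [heq, mkx_aa (by omega), hx1 (w : ℕ) (by omega)]
  | Sum.inr (Sum.inr w) =>
    have heq : Sum.inr (α := Fin (n+1)) (Sum.inr (β := Fin ℓ) w) = kArr n ℓ ((w : ℕ) + 1) := by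
      rw [kArr, dif_pos ⟨by omega, by omega⟩]
      rfl
    rw [heq, hkall ((w : ℕ) + 1) (by omega), mkx_k (by omega) (by omega)]

end

lemma IsLamRep_mono {n ℓ : ℕ} {L L' β β' : ℕ → ℕ} {lam : ℕ → ℕ → ℂ} {x : Arrow n ℓ → ℂ}
    (hL : ∀ h, h ≤ ℓ + 1 → L h = L' h) (hb : ∀ i, 1 ≤ i → i ≤ ℓ + 1 → β i = β' i)
    (H : IsLamRep n ℓ L β lam x) : IsLamRep n ℓ L' β' lam x := by
  intro i h1 h2
  have e1 : L' i = L i := (hL i h2).symm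
  have e2 : L' (i - 1) = L (i - 1) := (hL (i - 1) (by omega)).symm
  have e3 : β' i = β i := (hb i h1 h2).symm
  rw [e1, e2, e3]
  exact H i h1 h2

end ChartWn

open ChartWn

/-- for `a > 1` and `λ ∈ Δ`, the map `x ↦ (x(c_{0,n}), x(a_{n,0}))` is a
bijection from the set of `λ`-representations with
`x(a_{0,1}) = x(a_{1,2}) = ⋯ = x(a_{n−1,n}) = 1` onto `ℂ²` (the chart `W_n`). -/
theorem chart_Wn_bijective
    -- the group 1/r(1,a) with r > a ≥ 1 coprime
    (r a : ℕ) (ha : 1 ≤ a) (hra : a < r) (hcop : Nat.Coprime r a)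
    -- Hirzebruch–Jung expansions r/a = [α_1,…,α_n], r/(r−a) = [β_1,…,β_m]
    (n m ℓ : ℕ) (αs βs : List ℕ) (hn1 : 1 ≤ n)
    (hαlen : αs.length = n) (hα2 : ∀ x ∈ αs, 2 ≤ x)
    (hαcf : hjcf (αs.map (fun x => (x : ℚ))) = (r : ℚ) / (a : ℚ))
    (hβlen : βs.length = m) (hβ2 : ∀ x ∈ βs, 2 ≤ x)
    (hβcf : hjcf (βs.map (fun x => (x : ℚ))) = (r : ℚ) / ((r : ℚ) - (a : ℚ)))
    -- ℓ = Σ(α_i − 2), e = ℓ + 3 = m + 2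
    (hl : ℓ = ∑ i ∈ Finset.range n, (αs.getD i 0 - 2))
    (hm : m = ℓ + 1)
    -- l_h = tail vertex of k_h: weakly increasing, l_0 = 1, l_{ℓ+1} = n, with
    -- α_i − 2 of the extra arrows having tail i; Riemenschneider duality
    (L : ℕ → ℕ) (hL0 : L 0 = 1) (hLtop : L (ℓ + 1) = n)
    (hLmono : ∀ h₁ h₂, h₁ ≤ h₂ → h₂ ≤ ℓ + 1 → L h₁ ≤ L h₂)
    (hLrange : ∀ h, 1 ≤ h → h ≤ ℓ → 1 ≤ L h ∧ L h ≤ n)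
    (hmult : ∀ i, 1 ≤ i → i ≤ n →
      ((Finset.Icc 1 ℓ).filter (fun h => L h = i)).card = αs.getD (i - 1) 0 - 2)
    (hdual : ∀ t, 1 ≤ t → t ≤ m → βs.getD (t - 1) 0 = L t - L (t - 1) + 2)
    -- a > 1
    (ha1 : 1 < a)
    -- λ ∈ Δ
    (lam : ℕ → ℕ → ℂ) (hlam : InDelta ℓ (fun t => βs.getD (t - 1) 0) lam) :
    Function.Bijective
      (fun x : {x : Arrow n ℓ → ℂ //
          IsLamRep n ℓ L (fun t => βs.getD (t - 1) 0) lam x ∧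
          (∀ v, v + 1 ≤ n → x (aa n ℓ v) = 1)} =>
        ((x.val (cc n ℓ 0), x.val (aa n ℓ n)) : ℂ × ℂ)) := by
  classical
  set Lc : ℕ → ℕ := fun h => L (min h (ℓ + 1)) with hLc
  have hagree : ∀ h, h ≤ ℓ + 1 → Lc h = L h := by
    intro h hh
    simp only [hLc, Nat.min_eq_left hh]
  have hmC : Monotone Lc := by
    intro a b hab
    exact hLmono _ _ (by omega) (by omega)
  have hnC : ∀ i, Lc i ≤ n := by
    intro i
    simp only [hLc]
    set h := min i (ℓ + 1) with hh
    have h1 : h ≤ ℓ + 1 := by omega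
    rcases Nat.eq_zero_or_pos h with h0 | h0
    · rw [h0, hL0]; omega
    · rcases Nat.lt_or_ge h (ℓ + 1) with h2 | h2
      · exact (hLrange h h0 (by omega)).2
      · rw [show h = ℓ + 1 from by omega, hLtop]
  have h0C : Lc 0 = 1 := by rw [hagree 0 (by omega), hL0]
  have htC : Lc (ℓ + 1) = n := by rw [hagree (ℓ + 1) (le_refl _), hLtop]
  have hβ : ∀ i, 1 ≤ i → i ≤ ℓ + 1 → βs.getD (i - 1) 0 = Lc i - Lc (i - 1) + 2 := by
    intro i h1 h2
    rw [hagree i h2, hagree (i - 1) (by omega)]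
    exact hdual i h1 (by omega)
  have hΔC : ∀ i, 1 ≤ i → i ≤ ℓ + 1 →
      ∑ j ∈ Finset.range (Lc i - Lc (i - 1) + 2), lam i j = 0 := by
    intro i h1 h2
    have h3 : ∑ j ∈ Finset.range (βs.getD (i - 1) 0), lam i j = 0 := hlam i h1 h2
    rwa [hβ i h1 h2] at h3
  have repIff : ∀ x : Arrow n ℓ → ℂ,
      IsLamRep n ℓ L (fun t => βs.getD (t - 1) 0) lam x ↔
      IsLamRep n ℓ Lc (fun t => Lc t - Lc (t - 1) + 2) lam x := by
    intro x
    constructor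
    · intro H
      refine IsLamRep_mono (fun h hh => (hagree h hh).symm) ?_ H
      intro i h1 h2
      exact hβ i h1 h2
    · intro H
      refine IsLamRep_mono (fun h hh => hagree h hh) ?_ H
      intro i h1 h2
      exact (hβ i h1 h2).symm
  constructor
  · rintro x y hxy
    have hp : x.1 (cc n ℓ 0) = y.1 (cc n ℓ 0) := congrArg Prod.fst hxy
    have hq : x.1 (aa n ℓ n) = y.1 (aa n ℓ n) := congrArg Prod.snd hxy
    have hux := rep_eq hmC hnC h0C htC ((repIff x.1).mp x.2.1) x.2.2
    have huy := rep_eq hmC hnC h0C htC ((repIff y.1).mp y.2.1) y.2.2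
    rw [hp, hq] at hux
    exact Subtype.ext (hux.trans huy.symm)
  · rintro ⟨pp, qq⟩
    refine ⟨⟨mkx n ℓ (sol n ℓ Lc lam pp qq) pp qq,
      (repIff _).mpr (sol_isRep hmC hnC h0C htC hΔC), fun v hv => mkx_aa (by omega)⟩, ?_⟩
    show (mkx n ℓ (sol n ℓ Lc lam pp qq) pp qq (cc n ℓ 0),
      mkx n ℓ (sol n ℓ Lc lam pp qq) pp qq (aa n ℓ n)) = (pp, qq)
    rw [mkx_cc0, mkx_aan]
end
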